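/- arXiv:2503.16633 — 5 statements merged into one kernel-verified Lean document; each statement's English description precedes it below -/
import Mathlib

section
/- Uniform power-law bound on the ratio function under the light-traffic assumptions (Lemma on ℱ). Assume σ satisfies L1 and L2. Then there exist constants γ₀ ∈ (0,∞), γ_∞ ∈ (0,1), 𝔠 > 0 and 𝔞 > 0 such that for every x ∈ (0,𝔞] and every t > 0 one has ℱ_x(t) ≤ 𝔠(t^{γ_∞} + t^{γ₀}), and in addition, for every x ∈ (0,𝔞] and every t > 1, ℱ_x(t) ≤ 2𝔠 t^{γ_∞}. -/
open Filter Topology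

lemma baire_window (h : ℝ → ℝ) (hc : Continuous h) (lam : ℝ)
    (hpt : ∀ v : ℝ, Tendsto (fun u => h (u+v) - h u) atBot (𝓝 (lam * v)))
    (ε : ℝ) (hε : 0 < ε) :
    ∃ a δ U : ℝ, 0 < δ ∧
      ∀ u ≤ U, ∀ v ∈ Set.Icc a (a+δ), |h (u+v) - h u - lam*v| ≤ ε := by
  set E : ℕ → Set ℝ := fun n =>
    ⋂ (u : ℝ) (_ : u ≤ -(n:ℝ)), {v : ℝ | |h (u+v) - h u - lam*v| ≤ ε} with hE
  have hclosed : ∀ n, IsClosed (E n) := by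
    intro n
    refine isClosed_iInter fun u => isClosed_iInter fun _ => ?_
    have : Continuous fun v => |h (u+v) - h u - lam*v| := by
      apply Continuous.abs
      exact ((hc.comp (continuous_const.add continuous_id)).sub continuous_const).sub
        (continuous_const.mul continuous_id)
    exact isClosed_le this continuous_const
  have hcover : ⋃ n, E n = Set.univ := by
    ext v
    simp only [Set.mem_iUnion, Set.mem_univ, iff_true]
    have hev : ∀ᶠ u in atBot, |h (u+v) - h u - lam*v| ≤ ε := by
      have hnb : ∀ᶠ y in 𝓝 (lam*v), |y - lam*v| ≤ ε := by
        filter_upwards [Metric.closedBall_mem_nhds (lam*v) hε] with y hy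
        simpa [Real.dist_eq] using hy
      exact (hpt v).eventually hnb
    rcases eventually_atBot.1 hev with ⟨U, hU⟩
    rcases exists_nat_ge (-U) with ⟨n, hn⟩
    refine ⟨n, ?_⟩
    simp only [hE, Set.mem_iInter, Set.mem_setOf_eq]
    intro u hu
    exact hU u (hu.trans (by linarith))
  rcases nonempty_interior_of_iUnion_of_closed hclosed hcover with ⟨N, v₀, hv₀⟩
  rcases Metric.isOpen_iff.1 isOpen_interior v₀ hv₀ with ⟨r, hr, hball⟩
  refine ⟨v₀ - r/2, r/2, -(N:ℝ), by positivity, ?_⟩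
  intro u hu v hv
  have hvE : v ∈ E N := by
    apply interior_subset
    apply hball
    rw [Metric.mem_ball, Real.dist_eq]
    rw [Set.mem_Icc] at hv
    rw [abs_lt]
    constructor <;> [linarith [hv.1]; linarith [hv.2]]
  simp only [hE, Set.mem_iInter, Set.mem_setOf_eq] at hvE
  exact hvE u hu

lemma window_zero (h : ℝ → ℝ) (hc : Continuous h) (lam : ℝ)
    (hpt : ∀ v : ℝ, Tendsto (fun u => h (u+v) - h u) atBot (𝓝 (lam * v)))
    (ε : ℝ) (hε : 0 < ε) :
    ∃ δ U : ℝ, 0 < δ ∧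
      ∀ u ≤ U, ∀ w ∈ Set.Icc (0:ℝ) δ, |h (u+w) - h u - lam*w| ≤ ε := by
  rcases baire_window h hc lam hpt (ε/2) (by linarith) with ⟨a, δ, U, hδ, hW⟩
  refine ⟨δ, U + a, hδ, ?_⟩
  intro u hu w hw
  rw [Set.mem_Icc] at hw
  have h1 := hW (u - a) (by linarith) (a + w) (by constructor <;> [linarith; linarith])
  have h2 := hW (u - a) (by linarith) a (by constructor <;> [linarith; linarith])
  have e1 : u - a + (a + w) = u + w := by ring
  have e2 : u - a + a = u := by ring
  rw [e1] at h1; rw [e2] at h2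
  have : h (u+w) - h u - lam*w =
      (h (u+w) - h (u-a) - lam*(a+w)) - (h u - h (u-a) - lam*a) := by ring
  rw [this]
  calc |(h (u+w) - h (u-a) - lam*(a+w)) - (h u - h (u-a) - lam*a)|
      ≤ |h (u+w) - h (u-a) - lam*(a+w)| + |h u - h (u-a) - lam*a| := abs_sub _ _
    _ ≤ ε/2 + ε/2 := add_le_add h1 h2
    _ = ε := by ring

lemma uct (h : ℝ → ℝ) (hc : Continuous h) (lam : ℝ)
    (hpt : ∀ v : ℝ, Tendsto (fun u => h (u+v) - h u) atBot (𝓝 (lam * v)))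
    (ε : ℝ) (hε : 0 < ε) :
    ∃ U : ℝ, ∀ u ≤ U, ∀ v ∈ Set.Icc (0:ℝ) 1, |h (u+v) - h u - lam*v| ≤ ε := by
  rcases window_zero h hc lam hpt (ε/2) (by linarith) with ⟨δ, U₀, hδ, hW⟩
  set n : ℕ := ⌊1/δ⌋₊ with hn
  have hgrid : ∀ᶠ u in atBot, ∀ i ∈ Finset.range (n+1),
      |h (u + i*δ) - h u - lam*(i*δ)| ≤ ε/2 := by
    rw [eventually_all_finset]
    intro i _
    have hnb : ∀ᶠ y in 𝓝 (lam*((i:ℝ)*δ)), |y - lam*((i:ℝ)*δ)| ≤ ε/2 := by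
      filter_upwards [Metric.closedBall_mem_nhds (lam*((i:ℝ)*δ)) (show (0:ℝ) < ε/2 by linarith)] with y hy
      simpa [Real.dist_eq] using hy
    exact (hpt ((i:ℝ)*δ)).eventually hnb
  rcases eventually_atBot.1 hgrid with ⟨U₁, hU₁⟩
  refine ⟨min U₁ (U₀ - n*δ), ?_⟩
  intro u hu v hv
  rw [Set.mem_Icc] at hv
  set i : ℕ := ⌊v/δ⌋₊ with hi
  have hin : i ≤ n := Nat.floor_le_floor (by gcongr; exact hv.2)
  have hfl : (i:ℝ)*δ ≤ v := by
    have := Nat.floor_le (div_nonneg hv.1 hδ.le)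
    calc (i:ℝ)*δ ≤ (v/δ)*δ := by
          apply mul_le_mul_of_nonneg_right this hδ.le
      _ = v := by field_simp
  have hfl2 : v - i*δ ≤ δ := by
    have := Nat.lt_floor_add_one (v/δ)
    have h2 : v < ((i:ℝ)+1)*δ := by
      have := mul_lt_mul_of_pos_right this hδ
      rw [div_mul_cancel₀ _ hδ.ne'] at this
      push_cast at this ⊢
      linarith
    nlinarith
  have hbase : u + i*δ ≤ U₀ := by
    have h1 : u ≤ U₀ - n*δ := hu.trans (min_le_right _ _)
    have h2 : (i:ℝ)*δ ≤ n*δ := by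
      apply mul_le_mul_of_nonneg_right _ hδ.le
      exact_mod_cast hin
    linarith
  have hA := hW (u + i*δ) hbase (v - i*δ) ⟨by linarith, hfl2⟩
  have hB := hU₁ u (hu.trans (min_le_left _ _)) i (Finset.mem_range.2 (Nat.lt_succ_of_le hin))
  have e1 : u + i*δ + (v - i*δ) = u + v := by ring
  rw [e1] at hA
  have : h (u+v) - h u - lam*v =
      (h (u+v) - h (u + i*δ) - lam*(v - i*δ)) + (h (u + i*δ) - h u - lam*(i*δ)) := by ring
  rw [this]
  calc |_ + _| ≤ _ + _ := abs_add_le _ _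
    _ ≤ ε/2 + ε/2 := add_le_add hA hB
    _ = ε := by ring

lemma chain (h : ℝ → ℝ) (hc : Continuous h) (lam : ℝ)
    (hpt : ∀ v : ℝ, Tendsto (fun u => h (u+v) - h u) atBot (𝓝 (lam * v)))
    (ε : ℝ) (hε : 0 < ε) :
    ∃ U : ℝ, ∀ u u', u ≤ u' → u' ≤ U →
      |h u' - h u - lam*(u'-u)| ≤ ε*(u'-u) + ε := by
  rcases uct h hc lam hpt ε hε with ⟨U, hU⟩
  refine ⟨U, ?_⟩
  have key : ∀ k : ℕ, ∀ u u', u ≤ u' → u' ≤ U → u' - u ≤ k →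
      |h u' - h u - lam*(u'-u)| ≤ ε*(u'-u) + ε := by
    intro k
    induction k with
    | zero =>
      intro u u' h1 h2 h3
      have hv := hU u (h1.trans h2) (u' - u) ⟨by linarith, by norm_num at h3; linarith⟩
      rw [add_sub_cancel] at hv
      have : 0 ≤ ε*(u'-u) := mul_nonneg hε.le (by linarith)
      linarith [hv]
    | succ k ih =>
      intro u u' h1 h2 h3
      by_cases hle : u' - u ≤ 1
      · have hv := hU u (h1.trans h2) (u' - u) ⟨by linarith, hle⟩
        rw [add_sub_cancel] at hv
        have : 0 ≤ ε*(u'-u) := mul_nonneg hε.le (by linarith)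
        linarith [hv]
      · push_neg at hle
        have hih := ih u (u' - 1) (by linarith) (by linarith) (by push_cast at h3 ⊢; linarith)
        have hv := hU (u' - 1) (by linarith) 1 ⟨by norm_num, le_refl 1⟩
        rw [sub_add_cancel] at hv
        have e : h u' - h u - lam*(u'-u) =
            (h u' - h (u'-1) - lam*1) + (h (u'-1) - h u - lam*(u'-1-u)) := by ring
        rw [e]
        calc |_ + _| ≤ _ + _ := abs_add_le _ _
          _ ≤ ε + (ε*(u'-1-u) + ε) := add_le_add hv hih
          _ = ε*(u'-u) + ε := by ring
  intro u u' h1 h2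
  exact key ⌈u' - u⌉₊ u u' h1 h2 (Nat.le_ceil _)

lemma potter (σ : ℝ → ℝ) (hσcont : ContinuousOn σ (Set.Ici 0))
    (hσpos : ∀ t > (0:ℝ), 0 < σ t)
    (lam : ℝ)
    (hL1 : ∀ t > (0:ℝ), Tendsto (fun x => σ (t * x) / σ x) (𝓝[>] 0) (𝓝 (t ^ lam)))
    (ε : ℝ) (hε : 0 < ε) :
    ∃ A : ℝ, 0 < A ∧ ∀ y x : ℝ, 0 < y → y ≤ x → x ≤ A →
      σ x ≤ Real.exp ε * (x/y)^(lam+ε) * σ y ∧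
      σ y ≤ Real.exp ε * (y/x)^(lam-ε) * σ x := by
  set h : ℝ → ℝ := fun u => Real.log (σ (Real.exp u)) with hh
  have hcont : Continuous h := by
    have h1 : Continuous fun u => σ (Real.exp u) :=
      hσcont.comp_continuous Real.continuous_exp (fun u => Set.mem_Ici.2 (Real.exp_pos u).le)
    exact h1.log (fun u => (hσpos _ (Real.exp_pos u)).ne')
  have hpt : ∀ v : ℝ, Tendsto (fun u => h (u+v) - h u) atBot (𝓝 (lam * v)) := by
    intro v
    have hx : Tendsto Real.exp atBot (𝓝[>] (0:ℝ)) :=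
      tendsto_nhdsWithin_iff.mpr ⟨Real.tendsto_exp_atBot,
        Filter.Eventually.of_forall fun u => Real.exp_pos u⟩
    have h2 := (hL1 (Real.exp v) (Real.exp_pos v)).comp hx
    have h3 := h2.log (ne_of_gt (Real.rpow_pos_of_pos (Real.exp_pos v) lam))
    have h4 : Tendsto (fun u => Real.log (σ (Real.exp v * Real.exp u) / σ (Real.exp u)))
        atBot (𝓝 (lam * v)) := by
      rw [show lam*v = Real.log ((Real.exp v) ^ lam) by
        rw [Real.log_rpow (Real.exp_pos v), Real.log_exp]]
      exact h3
    apply h4.congr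
    intro u
    have e1 : Real.exp v * Real.exp u = Real.exp (u + v) := by
      rw [Real.exp_add]; ring
    rw [e1, Real.log_div (hσpos _ (Real.exp_pos _)).ne' (hσpos _ (Real.exp_pos _)).ne']
  rcases chain h hcont lam hpt ε hε with ⟨U, hU⟩
  refine ⟨Real.exp U, Real.exp_pos U, ?_⟩
  intro y x hy hyx hxA
  have hx : 0 < x := hy.trans_le hyx
  have hσx := hσpos x hx
  have hσy := hσpos y hy
  have hu' : Real.log x ≤ U := by
    calc Real.log x ≤ Real.log (Real.exp U) := Real.log_le_log hx hxA
      _ = U := Real.log_exp U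
  have hcb := hU (Real.log y) (Real.log x) (Real.log_le_log hy hyx) hu'
  rw [hh] at hcb
  simp only [Real.exp_log hx, Real.exp_log hy] at hcb
  set lx := Real.log x
  set ly := Real.log y
  have hLnn : 0 ≤ lx - ly := by
    have := Real.log_le_log hy hyx
    simp only [lx, ly]; linarith
  have hxy : (0:ℝ) < x/y := div_pos hx hy
  have hyxpos : (0:ℝ) < y/x := div_pos hy hx
  have habs := abs_le.1 hcb
  have hr1 : (x/y)^(lam+ε) = Real.exp ((lam+ε)*(lx-ly)) := by
    rw [Real.rpow_def_of_pos hxy, Real.log_div hx.ne' hy.ne']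
    congr 1; simp only [lx, ly]; ring
  have hr2 : (y/x)^(lam-ε) = Real.exp ((ε-lam)*(lx-ly)) := by
    rw [Real.rpow_def_of_pos hyxpos, Real.log_div hy.ne' hx.ne']
    congr 1; simp only [lx, ly]; ring
  constructor
  · calc σ x = Real.exp (Real.log (σ x)) := (Real.exp_log hσx).symm
      _ ≤ Real.exp (ε + (lam+ε)*(lx-ly) + Real.log (σ y)) := by
          apply Real.exp_le_exp.2
          nlinarith [habs.2, hε.le, hLnn]
      _ = Real.exp ε * (x/y)^(lam+ε) * σ y := by
          rw [Real.exp_add, Real.exp_add, hr1, Real.exp_log hσy]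
  · calc σ y = Real.exp (Real.log (σ y)) := (Real.exp_log hσy).symm
      _ ≤ Real.exp (ε + (ε-lam)*(lx-ly) + Real.log (σ x)) := by
          apply Real.exp_le_exp.2
          nlinarith [habs.1, hε.le, hLnn]
      _ = Real.exp ε * (y/x)^(lam-ε) * σ x := by
          rw [Real.exp_add, Real.exp_add, hr2, Real.exp_log hσx]

/-- **Uniform power-law bound on `ℱ_x(t) = σ(tx)/σ(x)` under the light-traffic
assumptions L1 and L2.** There are `γ₀ ∈ (0,∞)`, `γ_∞ ∈ (0,1)`, `𝔠 > 0`, `𝔞 > 0` such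
that `ℱ_x(t) ≤ 𝔠 (t^{γ_∞} + t^{γ₀})` for all `x ∈ (0,𝔞]`, `t > 0`, and moreover
`ℱ_x(t) ≤ 2𝔠 t^{γ_∞}` for all `x ∈ (0,𝔞]`, `t > 1`. -/
theorem F_uniform_bound_light
    (σ : ℝ → ℝ) (hσcont : ContinuousOn σ (Set.Ici 0)) (hσ0 : σ 0 = 0)
    (hσpos : ∀ t > (0:ℝ), 0 < σ t)
    -- assumption L1
    (lam : ℝ) (hlam : lam ∈ Set.Ioo (0:ℝ) 1)
    (hL1 : ∀ t > (0:ℝ), Tendsto (fun x => σ (t * x) / σ x) (𝓝[>] 0) (𝓝 (t ^ lam)))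
    -- assumption L2
    (t₀ β C : ℝ) (ht₀ : 0 < t₀) (hβ : β ∈ Set.Ioo (0:ℝ) 1) (hC : 0 < C)
    (hL2 : ∀ t > t₀, σ t ≤ C * t ^ β) :
    ∃ γ₀ γinf 𝔠 𝔞 : ℝ, 0 < γ₀ ∧ γinf ∈ Set.Ioo (0:ℝ) 1 ∧ 0 < 𝔠 ∧ 0 < 𝔞 ∧
      (∀ x, 0 < x → x ≤ 𝔞 → ∀ t > (0:ℝ),
        σ (t * x) / σ x ≤ 𝔠 * (t ^ γinf + t ^ γ₀)) ∧
      (∀ x, 0 < x → x ≤ 𝔞 → ∀ t > (1:ℝ),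
        σ (t * x) / σ x ≤ 2 * 𝔠 * t ^ γinf) := by
  obtain ⟨hlam0, hlam1⟩ := hlam
  obtain ⟨hβ0, hβ1⟩ := hβ
  set μ : ℝ := max lam β with hμ
  have hμ1 : μ < 1 := max_lt hlam1 hβ1
  set γinf : ℝ := (μ+1)/2 with hγ
  have hlamγ : lam < γinf := by
    have : lam ≤ μ := le_max_left _ _
    simp only [hγ]; linarith
  have hβγ : β ≤ γinf := by
    have : β ≤ μ := le_max_right _ _
    simp only [hγ]; linarith
  have hγ1 : γinf < 1 := by simp only [hγ]; linarith
  have hγpos : 0 < γinf := by simp only [hγ]; positivity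
  set γ₀ : ℝ := lam/2 with hγ₀
  set ε : ℝ := min (lam/2) ((γinf - lam)/2) with hεdef
  have hε : 0 < ε := lt_min (by linarith) (by linarith)
  have hε1 : ε ≤ lam/2 := min_le_left _ _
  have hε2 : lam + ε ≤ γinf := by
    have := min_le_right (lam/2) ((γinf - lam)/2)
    simp only [hεdef] at *
    linarith
  obtain ⟨A, hA, hPot⟩ := potter σ hσcont hσpos lam hL1 ε hε
  set p : ℝ := lam + ε with hp
  have hppos : 0 < p := by simp only [hp]; linarith
  have hpγ : p ≤ γinf := hε2
  -- numerator bound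
  set M : ℝ := sSup (σ '' Set.Icc 0 t₀) with hMdef
  have hMb : BddAbove (σ '' Set.Icc 0 t₀) :=
    (isCompact_Icc.image_of_continuousOn
      (hσcont.mono (Set.Icc_subset_Ici_self))).bddAbove
  have hM : ∀ y, 0 ≤ y → y ≤ t₀ → σ y ≤ M := fun y h1 h2 =>
    le_csSup hMb ⟨y, ⟨h1, h2⟩, rfl⟩
  have hM0 : 0 ≤ M := hσ0 ▸ hM 0 le_rfl ht₀.le
  have hNum : ∀ y : ℝ, 0 < y → σ y ≤ M + C * y^β := by
    intro y hy
    rcases le_or_gt y t₀ with hyt | hyt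
    · have h1 := hM y hy.le hyt
      have h2 : 0 ≤ C * y^β := by positivity
      linarith
    · have h1 := hL2 y hyt
      linarith
  have hσA := hσpos A hA
  -- lower bound on σ x for x ∈ (0, A]
  have hlow : ∀ x, 0 < x → x ≤ A →
      (σ A / (Real.exp ε * A^p)) * x^p ≤ σ x := by
    intro x hx hxA
    have h1 := (hPot x A hx hxA le_rfl).1
    rw [Real.div_rpow hA.le hx.le] at h1
    have hxp : (0:ℝ) < x^p := Real.rpow_pos_of_pos hx p
    have hAp : (0:ℝ) < A^p := Real.rpow_pos_of_pos hA p
    rw [div_mul_eq_mul_div, div_le_iff₀ (by positivity)]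
    calc σ A * x^p ≤ (Real.exp ε * (A^p / x^p) * σ x) * x^p :=
          mul_le_mul_of_nonneg_right h1 hxp.le
      _ = σ x * (Real.exp ε * A^p) := by field_simp; try ring
  set c : ℝ := σ A / (Real.exp ε * A^p) with hcdef
  have hcpos : 0 < c := by positivity
  set q : ℝ := β - p with hq
  set C' : ℝ := M / A^β + C with hC'
  have hC'pos : 0 < C' := by positivity
  set K : ℝ := C' * A^q / c with hK
  have hKpos : 0 < K := by positivity
  set 𝔠 : ℝ := Real.exp ε + K with h𝔠
  have h𝔠pos : 0 < 𝔠 := by positivity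
  -- case t > 1
  have hbig : ∀ x, 0 < x → x ≤ A → ∀ t, 1 < t → σ (t*x)/σ x ≤ 𝔠 * t^γinf := by
    intro x hx hxA t ht
    have ht0 : (0:ℝ) < t := by linarith
    have htx : 0 < t*x := by positivity
    have hσx := hσpos x hx
    rcases le_or_gt (t*x) A with hcase | hcase
    · -- moderate t : Potter directly
      have h1 := (hPot x (t*x) hx (le_mul_of_one_le_left hx.le ht.le) hcase).1
      have e1 : t*x/x = t := mul_div_cancel_right₀ t hx.ne'
      rw [e1] at h1
      have h2 : t^p ≤ t^γinf := Real.rpow_le_rpow_of_exponent_le ht.le hpγ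
      rw [div_le_iff₀ hσx]
      calc σ (t*x) ≤ Real.exp ε * t^p * σ x := h1
        _ ≤ Real.exp ε * t^γinf * σ x := by
            apply mul_le_mul_of_nonneg_right _ hσx.le
            exact mul_le_mul_of_nonneg_left h2 (Real.exp_pos ε).le
        _ ≤ 𝔠 * t^γinf * σ x := by
            apply mul_le_mul_of_nonneg_right _ hσx.le
            apply mul_le_mul_of_nonneg_right _ (by positivity)
            simp only [h𝔠]; linarith
    · -- large t : use L2-type bound
      -- numerator: σ(t*x) ≤ C' * (t*x)^β
      have hAtx : A < t*x := hcase
      have hnum : σ (t*x) ≤ C' * (t*x)^β := by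
        have h1 := hNum (t*x) htx
        have h2 : M ≤ (M/A^β) * (t*x)^β := by
          have hAβ : (0:ℝ) < A^β := Real.rpow_pos_of_pos hA β
          have h3 : A^β ≤ (t*x)^β := Real.rpow_le_rpow hA.le hAtx.le hβ0.le
          rw [div_mul_eq_mul_div, le_div_iff₀ hAβ]
          exact mul_le_mul_of_nonneg_left h3 hM0
        calc σ (t*x) ≤ M + C * (t*x)^β := h1
          _ ≤ (M/A^β) * (t*x)^β + C * (t*x)^β := by linarith
          _ = C' * (t*x)^β := by simp only [hC']; ring
      -- (t*x)^β ≤ A^q * t^γinf * x^p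
      have hkey : (t*x)^β ≤ A^q * (t^γinf * x^p) := by
        have hxq : x^β = x^q * x^p := by
          rw [← Real.rpow_add hx]; simp only [hq]; ring_nf
        have hmul : (t*x)^β = t^β * x^β := Real.mul_rpow ht0.le hx.le
        rcases le_or_gt 0 q with hq0 | hq0
        · have h1 : x^q ≤ A^q := Real.rpow_le_rpow hx.le hxA hq0
          have h2 : t^β ≤ t^γinf := Real.rpow_le_rpow_of_exponent_le ht.le hβγ
          rw [hmul, hxq]
          calc t^β * (x^q * x^p) ≤ t^γinf * (A^q * x^p) := by
                apply mul_le_mul h2 _ (by positivity) (by positivity)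
                exact mul_le_mul_of_nonneg_right h1 (by positivity)
            _ = A^q * (t^γinf * x^p) := by ring
        · have hAt : 0 < A/t := by positivity
          have h1 : x^q ≤ (A/t)^q :=
            Real.rpow_le_rpow_of_nonpos hAt
              (by rw [div_le_iff₀ ht0, mul_comm]; exact hAtx.le) hq0.le
          have h2 : (A/t)^q = A^q * (t^q)⁻¹ := by
            rw [Real.div_rpow hA.le ht0.le, div_eq_mul_inv]
          have htq : (0:ℝ) < t^q := Real.rpow_pos_of_pos ht0 q
          have h3 : t^β * (t^q)⁻¹ = t^p := by
            rw [← Real.rpow_neg ht0.le, ← Real.rpow_add ht0]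
            simp only [hq]; ring_nf
          have h4 : t^p ≤ t^γinf := Real.rpow_le_rpow_of_exponent_le ht.le hpγ
          rw [hmul, hxq]
          calc t^β * (x^q * x^p) ≤ t^β * ((A/t)^q * x^p) := by
                apply mul_le_mul_of_nonneg_left _ (by positivity)
                exact mul_le_mul_of_nonneg_right h1 (by positivity)
            _ = A^q * (t^β * (t^q)⁻¹ * x^p) := by rw [h2]; ring
            _ = A^q * (t^p * x^p) := by rw [h3]
            _ ≤ A^q * (t^γinf * x^p) := by
                apply mul_le_mul_of_nonneg_left _ (by positivity)
                exact mul_le_mul_of_nonneg_right h4 (by positivity)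
      have hden := hlow x hx hxA
      have hxp : (0:ℝ) < x^p := Real.rpow_pos_of_pos hx p
      calc σ (t*x)/σ x ≤ (C' * A^q * t^γinf * x^p) / (c * x^p) := by
            apply div_le_div₀ (by positivity) _ (by positivity) hden
            calc σ (t*x) ≤ C' * (t*x)^β := hnum
              _ ≤ C' * (A^q * (t^γinf * x^p)) :=
                  mul_le_mul_of_nonneg_left hkey hC'pos.le
              _ = C' * A^q * t^γinf * x^p := by ring
        _ = (C' * A^q / c) * t^γinf := by
            rw [show C' * A^q * t^γinf * x^p = (C' * A^q * t^γinf) * x^p by ring,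
              mul_div_mul_right _ _ hxp.ne']
            ring
        _ ≤ 𝔠 * t^γinf := by
            apply mul_le_mul_of_nonneg_right _ (by positivity)
            simp only [h𝔠, hK]
            linarith [(Real.exp_pos ε).le]
  -- case t ≤ 1
  have hsmall : ∀ x, 0 < x → x ≤ A → ∀ t, 0 < t → t ≤ 1 →
      σ (t*x)/σ x ≤ 𝔠 * t^γ₀ := by
    intro x hx hxA t ht0 ht1
    have htx : 0 < t*x := by positivity
    have hσx := hσpos x hx
    have h1 := (hPot (t*x) x htx (mul_le_of_le_one_left hx.le ht1) hxA).2
    have e1 : t*x/x = t := mul_div_cancel_right₀ t hx.ne'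
    rw [e1] at h1
    have h2 : t^(lam-ε) ≤ t^γ₀ :=
      Real.rpow_le_rpow_of_exponent_ge ht0 ht1 (by simp only [hγ₀]; linarith)
    rw [div_le_iff₀ hσx]
    calc σ (t*x) ≤ Real.exp ε * t^(lam-ε) * σ x := h1
      _ ≤ Real.exp ε * t^γ₀ * σ x := by
          apply mul_le_mul_of_nonneg_right _ hσx.le
          exact mul_le_mul_of_nonneg_left h2 (Real.exp_pos ε).le
      _ ≤ 𝔠 * t^γ₀ * σ x := by
          apply mul_le_mul_of_nonneg_right _ hσx.le
          apply mul_le_mul_of_nonneg_right _ (by positivity)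
          simp only [h𝔠]; linarith
  refine ⟨γ₀, γinf, 𝔠, A, by simp only [hγ₀]; linarith, ⟨hγpos, hγ1⟩, h𝔠pos, hA, ?_, ?_⟩
  · intro x hx hxA t ht
    rcases le_or_gt t 1 with ht1 | ht1
    · have h1 := hsmall x hx hxA t ht ht1
      have h2 : 0 ≤ 𝔠 * t^γinf := by positivity
      rw [mul_add]
      exact h1.trans (le_add_of_nonneg_left h2)
    · have h1 := hbig x hx hxA t ht1
      have h2 : 0 ≤ 𝔠 * t^γ₀ := by positivity
      rw [mul_add]
      exact h1.trans (le_add_of_nonneg_right h2)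
  · intro x hx hxA t ht
    have h1 := hbig x hx hxA t ht
    have h2 : 0 ≤ 𝔠 * t^γinf := by positivity
    have e : 2*𝔠*t^γinf = 𝔠*t^γinf + 𝔠*t^γinf := by ring
    rw [e]
    exact h1.trans (le_add_of_nonneg_left h2)
end

section
/- Uniform power-law bound on the ratio function under the heavy-traffic assumptions. Assume σ satisfies H1 and H2. Then there exist constants γ₀ ∈ (0,∞), γ_∞ ∈ (0,1), 𝔠 > 0 and 𝔞 > 0 such that for every x ∈ [𝔞,∞) and every t > 0 one has ℱ_x(t) ≤ 𝔠(t^{γ_∞} + t^{γ₀}), and in addition, for every x ∈ [𝔞,∞) and every t > 1, ℱ_x(t) ≤ 2𝔠 t^{γ_∞}. -/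
open Filter Topology MeasureTheory ENNReal

lemma uct_aux (h : ℝ → ℝ) (hc : Continuous h) (L : ℝ)
    (hpt : ∀ u : ℝ, Tendsto (fun x => h (x + u) - h x) atTop (𝓝 (L * u)))
    {δ : ℝ} (hδ : 0 < δ) :
    ∃ X : ℝ, ∀ x : ℝ, X ≤ x → ∀ u : ℝ, 0 ≤ u →
      |h (x + u) - h x - L * u| ≤ δ * (u + 1) := by
  set δ' := δ / 2 with hδ'def
  have hδ' : 0 < δ' := by positivity
  set E : ℕ → Set ℝ := fun n =>
    Set.Icc (0:ℝ) 2 ∩ ⋂ (x : ℝ) (_ : (n:ℝ) ≤ x), {u | |h (x + u) - h x - L * u| ≤ δ'} with hE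
  have hEsub : ∀ n, E n ⊆ Set.Icc (0:ℝ) 2 := fun n => Set.inter_subset_left
  have hEmem : ∀ n, ∀ u ∈ E n, ∀ x : ℝ, (n:ℝ) ≤ x → |h (x + u) - h x - L * u| ≤ δ' := by
    intro n u hu x hx
    have := hu.2
    simp only [Set.mem_iInter, Set.mem_setOf_eq] at this
    exact this x hx
  have hEclosed : ∀ n, IsClosed (E n) := by
    intro n
    apply isClosed_Icc.inter
    refine isClosed_iInter fun x => isClosed_iInter fun _ => ?_
    have hcont : Continuous fun u => |h (x + u) - h x - L * u| := by
      apply Continuous.abs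
      exact ((hc.comp (continuous_const.add continuous_id)).sub continuous_const).sub
        (continuous_const.mul continuous_id)
    exact isClosed_le hcont continuous_const
  have hEmono : Monotone E := by
    intro n m hnm u hu
    refine ⟨hu.1, ?_⟩
    simp only [Set.mem_iInter, Set.mem_setOf_eq]
    intro x hx
    exact hEmem n u hu x (le_trans (by exact_mod_cast hnm) hx)
  have hEunion : Set.Icc (0:ℝ) 2 ⊆ ⋃ n, E n := by
    intro u hu
    have h0 : Tendsto (fun x => h (x + u) - h x - L * u) atTop (𝓝 0) := by
      simpa using (hpt u).sub_const (L * u)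
    have h1 : ∀ᶠ x in atTop, |h (x + u) - h x - L * u| ≤ δ' := by
      have h2 : Tendsto (fun x => |h (x + u) - h x - L * u|) atTop (𝓝 0) := by
        simpa using h0.abs
      exact h2.eventually (eventually_le_nhds hδ')
    obtain ⟨X, hX⟩ := eventually_atTop.mp h1
    obtain ⟨n, hn⟩ := exists_nat_ge X
    refine Set.mem_iUnion.mpr ⟨n, hu, ?_⟩
    simp only [Set.mem_iInter, Set.mem_setOf_eq]
    intro x hx
    exact hX x (le_trans hn hx)
  have hvol : Tendsto (fun n => volume (E n)) atTop (𝓝 (volume (⋃ n, E n))) :=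
    tendsto_measure_iUnion_atTop hEmono
  have hvol2 : volume (⋃ n, E n) = 2 := by
    have hIcc : volume (Set.Icc (0:ℝ) 2) = 2 := by
      rw [Real.volume_Icc]; norm_num
    refine le_antisymm ?_ ?_
    · calc volume (⋃ n, E n) ≤ volume (Set.Icc (0:ℝ) 2) :=
        measure_mono (Set.iUnion_subset hEsub)
        _ = 2 := hIcc
    · calc (2 : ℝ≥0∞) = volume (Set.Icc (0:ℝ) 2) := hIcc.symm
        _ ≤ volume (⋃ n, E n) := measure_mono hEunion
  obtain ⟨N, hN⟩ : ∃ N, (3/2 : ℝ≥0∞) < volume (E N) := by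
    rw [hvol2] at hvol
    have : ∀ᶠ n in atTop, (3/2 : ℝ≥0∞) < volume (E n) :=
      hvol.eventually (eventually_gt_nhds (by
        rw [ENNReal.div_lt_iff (by norm_num) (by norm_num)]; norm_num))
    exact this.exists
  have key : ∀ v : ℝ, 0 ≤ v → v ≤ 1 → ∀ x : ℝ, (N:ℝ) + 2 ≤ x →
      |h (x + v) - h x - L * v| ≤ δ := by
    intro v hv0 hv1 x hx
    set B := (fun u : ℝ => u + (-v)) ⁻¹' (E N) with hB
    have hBvol : volume B = volume (E N) := measure_preimage_add_right volume (-v) (E N)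
    have hmB : MeasurableSet B := (hEclosed N).measurableSet.preimage (measurable_add_const _)
    have hinter : (E N ∩ B).Nonempty := by
      by_contra hcon
      rw [Set.not_nonempty_iff_eq_empty] at hcon
      have hdisj : Disjoint (E N) B := Set.disjoint_iff_inter_eq_empty.mpr hcon
      have h1 : volume (E N ∪ B) = volume (E N) + volume B := measure_union hdisj hmB
      have hsub : E N ∪ B ⊆ Set.Icc (0:ℝ) 3 := by
        rintro u (hu | hu)
        · have h2 := hEsub N hu
          exact ⟨h2.1, h2.2.trans (by norm_num)⟩
        · have h2 : u + (-v) ∈ Set.Icc (0:ℝ) 2 := (hEsub N) hu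
          obtain ⟨h3, h4⟩ := h2
          constructor <;> [linarith; linarith]
      have h2 : volume (E N ∪ B) ≤ 3 := by
        refine le_trans (measure_mono hsub) ?_
        rw [Real.volume_Icc]
        norm_num
      rw [h1, hBvol] at h2
      have h3 : (3 : ℝ≥0∞) < volume (E N) + volume (E N) := by
        calc (3 : ℝ≥0∞) = 3/2 + 3/2 := by norm_num
          _ < _ := ENNReal.add_lt_add hN hN
      exact absurd h2 (not_le.mpr h3)
    obtain ⟨u, huA, huB⟩ := hinter
    have hu' : u + (-v) ∈ E N := huB
    have hu02 : u + (-v) ∈ Set.Icc (0:ℝ) 2 := (hEsub N) hu'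
    set y := x - (u - v) with hy
    have hyN : (N:ℝ) ≤ y := by
      have := hu02.2
      simp only [hy]
      linarith
    have e1 := hEmem N u huA y hyN
    have e2 := hEmem N (u + (-v)) hu' y hyN
    have hxy1 : y + u = x + v := by simp only [hy]; ring
    have hxy2 : y + (u + (-v)) = x := by simp only [hy]; ring
    rw [hxy1] at e1
    rw [hxy2] at e2
    have hdecomp : h (x + v) - h x - L * v
        = (h (x + v) - h y - L * u) - (h x - h y - L * (u + (-v))) := by ring
    rw [hdecomp]
    calc |(h (x + v) - h y - L * u) - (h x - h y - L * (u + (-v)))|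
        ≤ |h (x + v) - h y - L * u| + |h x - h y - L * (u + (-v))| := abs_sub _ _
      _ ≤ δ' + δ' := add_le_add e1 e2
      _ = δ := by rw [hδ'def]; ring
  have tele : ∀ m : ℕ, ∀ u : ℝ, 0 ≤ u → u ≤ m + 1 → ∀ x : ℝ, (N:ℝ) + 2 ≤ x →
      |h (x + u) - h x - L * u| ≤ δ * (m + 1) := by
    intro m
    induction m with
    | zero =>
      intro u hu0 hu1 x hx
      have := key u hu0 (by push_cast at hu1; linarith) x hx
      simpa using this
    | succ m ih =>
      intro u hu0 hu1 x hx
      rcases le_or_gt u ((m:ℝ) + 1) with hle | hgt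
      · calc |h (x + u) - h x - L * u| ≤ δ * (m + 1) := ih u hu0 hle x hx
          _ ≤ δ * (↑(m+1) + 1) := by
            push_cast
            nlinarith
      · have hu1' : 0 ≤ u - 1 := by linarith
        have hu1'' : u - 1 ≤ (m:ℝ) + 1 := by
          push_cast at hu1
          linarith
        have hih := ih (u - 1) hu1' hu1'' (x + 1) (by linarith)
        have hkey := key 1 zero_le_one le_rfl x hx
        have harg : x + 1 + (u - 1) = x + u := by ring
        rw [harg] at hih
        have hdecomp : h (x + u) - h x - L * u
            = (h (x + u) - h (x + 1) - L * (u - 1)) + (h (x + 1) - h x - L * 1) := by ring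
        rw [hdecomp]
        calc |(h (x + u) - h (x + 1) - L * (u - 1)) + (h (x + 1) - h x - L * 1)|
            ≤ |h (x + u) - h (x + 1) - L * (u - 1)| + |h (x + 1) - h x - L * 1| :=
              abs_add_le _ _
          _ ≤ δ * (m + 1) + δ := add_le_add hih hkey
          _ ≤ δ * (↑(m+1) + 1) := by push_cast; linarith
  refine ⟨(N:ℝ) + 2, fun x hx u hu => ?_⟩
  have h1 := tele ⌊u⌋₊ u hu (le_of_lt (Nat.lt_floor_add_one u)) x hx
  have h2 : (⌊u⌋₊ : ℝ) ≤ u := Nat.floor_le hu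
  calc |h (x + u) - h x - L * u| ≤ δ * (⌊u⌋₊ + 1) := h1
    _ ≤ δ * (u + 1) := by nlinarith

open Filter Topology MeasureTheory ENNReal

set_option maxHeartbeats 1000000 in
/-- **Uniform power-law bound on `ℱ_x(t) = σ(tx)/σ(x)` under the heavy-traffic
assumptions H1 and H2.** There are `γ₀ ∈ (0,∞)`, `γ_∞ ∈ (0,1)`, `𝔠 > 0`, `𝔞 > 0` such
that `ℱ_x(t) ≤ 𝔠 (t^{γ_∞} + t^{γ₀})` for all `x ∈ [𝔞,∞)`, `t > 0`, and moreover
`ℱ_x(t) ≤ 2𝔠 t^{γ_∞}` for all `x ∈ [𝔞,∞)`, `t > 1`. -/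
theorem F_uniform_bound_heavy
    (σ : ℝ → ℝ) (hσcont : ContinuousOn σ (Set.Ici 0)) (hσ0 : σ 0 = 0)
    (hσpos : ∀ t > (0:ℝ), 0 < σ t)
    -- assumption H1
    (α : ℝ) (hα : α ∈ Set.Ioo (0:ℝ) 1)
    (hH1 : ∀ t > (0:ℝ), Tendsto (fun x => σ (t * x) / σ x) atTop (𝓝 (t ^ α)))
    -- assumption H2
    (t₀ β C : ℝ) (ht₀ : 0 < t₀) (hβ : β ∈ Set.Ioc (0:ℝ) 1) (hC : 0 < C)
    (hH2 : ∀ t, 0 < t → t < t₀ → σ t ≤ C * t ^ β) :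
    ∃ γ₀ γinf 𝔠 𝔞 : ℝ, 0 < γ₀ ∧ γinf ∈ Set.Ioo (0:ℝ) 1 ∧ 0 < 𝔠 ∧ 0 < 𝔞 ∧
      (∀ x, 𝔞 ≤ x → ∀ t > (0:ℝ),
        σ (t * x) / σ x ≤ 𝔠 * (t ^ γinf + t ^ γ₀)) ∧
      (∀ x, 𝔞 ≤ x → ∀ t > (1:ℝ),
        σ (t * x) / σ x ≤ 2 * 𝔠 * t ^ γinf) := by
  obtain ⟨hα0, hα1⟩ := hα
  obtain ⟨hβ0, hβ1⟩ := hβ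
  -- the additive version `h = log ∘ σ ∘ exp`
  set h : ℝ → ℝ := fun x => Real.log (σ (Real.exp x)) with hh
  have hσexp_pos : ∀ x : ℝ, 0 < σ (Real.exp x) := fun x => hσpos _ (Real.exp_pos x)
  have hccomp : Continuous fun x => σ (Real.exp x) := by
    rw [continuous_iff_continuousAt]
    intro x
    show ContinuousAt (σ ∘ Real.exp) x
    exact ContinuousAt.comp (hσcont.continuousAt (Ici_mem_nhds (Real.exp_pos x)))
      Real.continuous_exp.continuousAt
  have hhcont : Continuous h := by
    rw [continuous_iff_continuousAt]
    intro x
    show ContinuousAt (Real.log ∘ fun x => σ (Real.exp x)) x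
    exact ContinuousAt.comp (Real.continuousAt_log (ne_of_gt (hσexp_pos x)))
      hccomp.continuousAt
  have hpt : ∀ u : ℝ, Tendsto (fun x => h (x + u) - h x) atTop (𝓝 (α * u)) := by
    intro u
    have h1 : Tendsto (fun y : ℝ => σ (Real.exp u * y) / σ y) atTop
        (𝓝 ((Real.exp u) ^ α)) := hH1 _ (Real.exp_pos u)
    have h2 : Tendsto (fun x : ℝ => σ (Real.exp u * Real.exp x) / σ (Real.exp x)) atTop
        (𝓝 ((Real.exp u) ^ α)) := h1.comp Real.tendsto_exp_atTop
    have h3 : Tendsto (fun x : ℝ => Real.log (σ (Real.exp u * Real.exp x) / σ (Real.exp x)))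
        atTop (𝓝 (Real.log ((Real.exp u) ^ α))) :=
      (Real.continuousAt_log
        (ne_of_gt (Real.rpow_pos_of_pos (Real.exp_pos u) α))).tendsto.comp h2
    have h4 : Real.log ((Real.exp u) ^ α) = α * u := by
      rw [Real.log_rpow (Real.exp_pos u), Real.log_exp]
    rw [h4] at h3
    refine h3.congr fun x => ?_
    rw [Real.log_div (ne_of_gt (hσpos _ (by positivity))) (ne_of_gt (hσexp_pos x)),
      mul_comm (Real.exp u) (Real.exp x), ← Real.exp_add]
  -- apply the uniform convergence theorem
  set ε := min α (1 - α) / 2 with hεdef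
  have hminpos : 0 < min α (1 - α) := lt_min hα0 (by linarith)
  have hε : 0 < ε := by positivity
  have hεα : ε < α := by
    have := min_le_left α (1 - α)
    rw [hεdef]; linarith
  have hεα1 : α + ε < 1 := by
    have := min_le_right α (1 - α)
    rw [hεdef]; linarith
  obtain ⟨X₀, hX₀⟩ := uct_aux h hhcont α hpt hε
  -- Potter-type bounds
  set X := Real.exp X₀ with hXdef
  have hXpos : 0 < X := Real.exp_pos _
  have hσX : 0 < σ X := hσpos _ hXpos
  set A := Real.exp ε with hAdef
  have hA1 : 1 ≤ A := Real.one_le_exp hε.le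
  have hApos : 0 < A := by linarith
  have hval : ∀ y : ℝ, 0 < y → h (Real.log y) = Real.log (σ y) := by
    intro y hy
    simp only [hh, Real.exp_log hy]
  have P1 : ∀ y : ℝ, X ≤ y → ∀ t : ℝ, 1 ≤ t → σ (t * y) ≤ A * t ^ (α + ε) * σ y := by
    intro y hy t ht
    have hy0 : 0 < y := lt_of_lt_of_le hXpos hy
    have ht0 : 0 < t := lt_of_lt_of_le one_pos ht
    have hty0 : 0 < t * y := by positivity
    have hσy : 0 < σ y := hσpos _ hy0
    have hσty : 0 < σ (t * y) := hσpos _ hty0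
    have hu0 : 0 ≤ Real.log t := Real.log_nonneg ht
    have hx0 : X₀ ≤ Real.log y := by
      calc X₀ = Real.log X := (Real.log_exp X₀).symm
        _ ≤ Real.log y := Real.log_le_log hXpos hy
    have key := hX₀ (Real.log y) hx0 (Real.log t) hu0
    have h1 : h (Real.log y + Real.log t) - h (Real.log y) - α * Real.log t
        ≤ ε * (Real.log t + 1) := le_trans (le_abs_self _) key
    have e1 : Real.log y + Real.log t = Real.log (t * y) := by
      rw [Real.log_mul (ne_of_gt ht0) (ne_of_gt hy0)]; ring
    rw [e1, hval _ hty0, hval _ hy0] at h1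
    have h2 : Real.log (σ (t * y)) ≤ Real.log (σ y) + (α + ε) * Real.log t + ε := by
      nlinarith [h1]
    have h3 : t ^ (α + ε) = Real.exp ((α + ε) * Real.log t) := by
      rw [Real.rpow_def_of_pos ht0, mul_comm]
    calc σ (t * y) = Real.exp (Real.log (σ (t * y))) := (Real.exp_log hσty).symm
      _ ≤ Real.exp (Real.log (σ y) + (α + ε) * Real.log t + ε) := Real.exp_le_exp.mpr h2
      _ = A * t ^ (α + ε) * σ y := by
          rw [Real.exp_add, Real.exp_add, Real.exp_log hσy, h3, hAdef]; ring
  have P2 : ∀ y : ℝ, X ≤ y → ∀ t : ℝ, 0 < t → t ≤ 1 → X ≤ t * y →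
      σ (t * y) ≤ A * t ^ (α - ε) * σ y := by
    intro y hy t ht0 ht1 hty
    have hy0 : 0 < y := lt_of_lt_of_le hXpos hy
    have hty0 : 0 < t * y := by positivity
    have hσy : 0 < σ y := hσpos _ hy0
    have hσty : 0 < σ (t * y) := hσpos _ hty0
    have hu0 : 0 ≤ -Real.log t := neg_nonneg.mpr (Real.log_nonpos ht0.le ht1)
    have hx0 : X₀ ≤ Real.log (t * y) := by
      calc X₀ = Real.log X := (Real.log_exp X₀).symm
        _ ≤ Real.log (t * y) := Real.log_le_log hXpos hty
    have key := hX₀ (Real.log (t * y)) hx0 (-Real.log t) hu0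
    have h1 : -(ε * (-Real.log t + 1))
        ≤ h (Real.log (t * y) + -Real.log t) - h (Real.log (t * y)) - α * (-Real.log t) :=
      (abs_le.mp key).1
    have e1 : Real.log (t * y) + -Real.log t = Real.log y := by
      rw [Real.log_mul (ne_of_gt ht0) (ne_of_gt hy0)]; ring
    rw [e1, hval _ hy0, hval _ hty0] at h1
    have h2 : Real.log (σ (t * y)) ≤ Real.log (σ y) + (α - ε) * Real.log t + ε := by
      nlinarith [h1]
    have h3 : t ^ (α - ε) = Real.exp ((α - ε) * Real.log t) := by
      rw [Real.rpow_def_of_pos ht0, mul_comm]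
    calc σ (t * y) = Real.exp (Real.log (σ (t * y))) := (Real.exp_log hσty).symm
      _ ≤ Real.exp (Real.log (σ y) + (α - ε) * Real.log t + ε) := Real.exp_le_exp.mpr h2
      _ = A * t ^ (α - ε) * σ y := by
          rw [Real.exp_add, Real.exp_add, Real.exp_log hσy, h3, hAdef]; ring
  -- lower bound on σ
  set c := σ X / (A * X ^ (α - ε)) with hcdef
  have hXγ : 0 < X ^ (α - ε) := Real.rpow_pos_of_pos hXpos _
  have hc : 0 < c := div_pos hσX (by positivity)
  have P3 : ∀ y : ℝ, X ≤ y → c * y ^ (α - ε) ≤ σ y := by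
    intro y hy
    have hy0 : 0 < y := lt_of_lt_of_le hXpos hy
    have hyγ : 0 < y ^ (α - ε) := Real.rpow_pos_of_pos hy0 _
    have hσy : 0 < σ y := hσpos _ hy0
    have ht0 : 0 < X / y := by positivity
    have ht1 : X / y ≤ 1 := (div_le_one hy0).mpr hy
    have hcancel : (X / y) * y = X := div_mul_cancel₀ _ (ne_of_gt hy0)
    have h1 := P2 y hy (X / y) ht0 ht1 (le_of_eq hcancel.symm)
    rw [hcancel] at h1
    have hrw : (X / y) ^ (α - ε) = X ^ (α - ε) / y ^ (α - ε) :=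
      Real.div_rpow hXpos.le hy0.le _
    rw [hrw] at h1
    have h5 : σ X * y ^ (α - ε) ≤ σ y * (A * X ^ (α - ε)) := by
      have h6 := mul_le_mul_of_nonneg_right h1 hyγ.le
      calc σ X * y ^ (α - ε) ≤ (A * (X ^ (α - ε) / y ^ (α - ε)) * σ y) * y ^ (α - ε) := h6
        _ = σ y * (A * X ^ (α - ε)) := by field_simp
    rw [hcdef, div_mul_eq_mul_div, div_le_iff₀ (by positivity)]
    exact h5
  -- constants
  set Y := max X t₀ with hYdef
  have hY0 : 0 < Y := lt_of_lt_of_le hXpos (le_max_left _ _)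
  obtain ⟨z, hz, hzmax⟩ := isCompact_Icc.exists_isMaxOn (Set.nonempty_Icc.mpr hY0.le)
    (hσcont.mono (Set.Icc_subset_Ici_self))
  set M := σ z with hMdef
  have hM0 : 0 < M := lt_of_lt_of_le (hσpos Y hY0) (hzmax ⟨hY0.le, le_refl Y⟩)
  set γ₀ := min β (α - ε) with hγ₀def
  have hγ₀pos : 0 < γ₀ := lt_min hβ0 (by linarith)
  set γinf := α + ε with hγinfdef
  have hγinfpos : 0 < γinf := by rw [hγinfdef]; linarith
  have hγ₀γ : γ₀ ≤ α - ε := min_le_right _ _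
  have hγ₀β : γ₀ ≤ β := min_le_left _ _
  have hγ₀γinf : γ₀ ≤ γinf := by rw [hγinfdef]; linarith
  have ht₀γ : 0 < t₀ ^ γ₀ := Real.rpow_pos_of_pos ht₀ _
  set K := (C / c) * max 1 (t₀ ^ (β - (α - ε))) with hKdef
  have hK0 : 0 < K :=
    mul_pos (div_pos hC hc) (lt_of_lt_of_le one_pos (le_max_left _ _))
  set D := M / (c * t₀ ^ γ₀) with hDdef
  have hD0 : 0 < D := div_pos hM0 (by positivity)
  set 𝔠 := max (max A K) D with h𝔠def
  have h𝔠A : A ≤ 𝔠 := le_trans (le_max_left A K) (le_max_left _ _)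
  have h𝔠K : K ≤ 𝔠 := le_trans (le_max_right A K) (le_max_left _ _)
  have h𝔠D : D ≤ 𝔠 := le_max_right _ _
  have h𝔠0 : 0 < 𝔠 := lt_of_lt_of_le hApos h𝔠A
  set 𝔞 := max 1 Y with h𝔞def
  have h𝔞0 : (0:ℝ) < 𝔞 := lt_of_lt_of_le one_pos (le_max_left _ _)
  -- main bound
  have main : ∀ x, 𝔞 ≤ x → ∀ t > (0:ℝ), σ (t * x) / σ x ≤ 𝔠 * (t ^ γinf + t ^ γ₀) := by
    intro x hx t ht
    have hx1 : (1:ℝ) ≤ x := le_trans (le_max_left _ _) hx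
    have hxY : Y ≤ x := le_trans (le_max_right _ _) hx
    have hxX : X ≤ x := le_trans (le_max_left X t₀) hxY
    have hxt₀ : t₀ ≤ x := le_trans (le_max_right X t₀) hxY
    have hx0 : 0 < x := by linarith
    have hσx : 0 < σ x := hσpos x hx0
    have htinfpos : 0 < t ^ γinf := Real.rpow_pos_of_pos ht _
    have ht₀pos : 0 < t ^ γ₀ := Real.rpow_pos_of_pos ht _
    rw [div_le_iff₀ hσx]
    rcases le_or_gt Y (t * x) with hbig | hsmall
    · rcases le_or_gt 1 t with ht1 | ht1
      · have hP1 := P1 x hxX t ht1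
        have hstep : A * t ^ (α + ε) ≤ 𝔠 * (t ^ γinf + t ^ γ₀) := by
          have h1 : A * t ^ γinf ≤ 𝔠 * t ^ γinf :=
            mul_le_mul_of_nonneg_right h𝔠A htinfpos.le
          have h2 : 0 < 𝔠 * t ^ γ₀ := mul_pos h𝔠0 ht₀pos
          calc A * t ^ (α + ε) = A * t ^ γinf := by rw [hγinfdef]
            _ ≤ 𝔠 * t ^ γinf := h1
            _ ≤ 𝔠 * (t ^ γinf + t ^ γ₀) := by linarith
        calc σ (t * x) ≤ A * t ^ (α + ε) * σ x := hP1
          _ ≤ 𝔠 * (t ^ γinf + t ^ γ₀) * σ x :=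
            mul_le_mul_of_nonneg_right hstep hσx.le
      · have hP2 := P2 x hxX t ht ht1.le (le_trans (le_max_left X t₀) hbig)
        have hexp : t ^ (α - ε) ≤ t ^ γ₀ :=
          Real.rpow_le_rpow_of_exponent_ge ht ht1.le hγ₀γ
        have hstep : A * t ^ (α - ε) ≤ 𝔠 * (t ^ γinf + t ^ γ₀) := by
          have h1 : A * t ^ (α - ε) ≤ 𝔠 * t ^ γ₀ := by
            calc A * t ^ (α - ε) ≤ A * t ^ γ₀ :=
              mul_le_mul_of_nonneg_left hexp hApos.le
              _ ≤ 𝔠 * t ^ γ₀ := mul_le_mul_of_nonneg_right h𝔠A ht₀pos.le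
          have h2 : 0 < 𝔠 * t ^ γinf := mul_pos h𝔠0 htinfpos
          linarith
        calc σ (t * x) ≤ A * t ^ (α - ε) * σ x := hP2
          _ ≤ 𝔠 * (t ^ γinf + t ^ γ₀) * σ x :=
            mul_le_mul_of_nonneg_right hstep hσx.le
    · have ht1 : t < 1 := by
        by_contra hcon
        push_neg at hcon
        have : Y ≤ t * x := le_trans hxY (le_mul_of_one_le_left hx0.le hcon)
        linarith
      have hσxlow : c * x ^ (α - ε) ≤ σ x := P3 x hxX
      have hxγ₀ : 0 < x ^ γ₀ := Real.rpow_pos_of_pos hx0 _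
      have hσxlow2 : c * x ^ γ₀ ≤ σ x := by
        have hle : x ^ γ₀ ≤ x ^ (α - ε) := Real.rpow_le_rpow_of_exponent_le hx1 hγ₀γ
        exact le_trans (mul_le_mul_of_nonneg_left hle hc.le) hσxlow
      have hfinal : σ (t * x) ≤ 𝔠 * t ^ γ₀ * σ x := by
        rcases lt_or_ge (t * x) t₀ with h2a | h2b
        · -- H2 region
          have hσtx : σ (t * x) ≤ C * (t * x) ^ β := hH2 _ (by positivity) h2a
          have hmul : (t * x) ^ β = t ^ β * x ^ β := Real.mul_rpow ht.le hx0.le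
          have hclaim : t ^ β * x ^ β
              ≤ max 1 (t₀ ^ (β - (α - ε))) * (t ^ γ₀ * x ^ (α - ε)) := by
            rcases le_or_gt (α - ε) β with hcase | hcase
            · have hγeq : γ₀ = α - ε := min_eq_right hcase
              have hxsplit : x ^ β = x ^ (α - ε) * x ^ (β - (α - ε)) := by
                rw [← Real.rpow_add hx0]; ring_nf
              have hxle : x ≤ t₀ / t := by
                rw [le_div_iff₀ ht]
                linarith [mul_comm x t]
              have hxe : x ^ (β - (α - ε)) ≤ (t₀ / t) ^ (β - (α - ε)) :=
                Real.rpow_le_rpow hx0.le hxle (by linarith)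
              have hdiv : (t₀ / t) ^ (β - (α - ε)) = t₀ ^ (β - (α - ε)) / t ^ (β - (α - ε)) :=
                Real.div_rpow ht₀.le ht.le _
              have htsplit : t ^ β / t ^ (β - (α - ε)) = t ^ (α - ε) := by
                rw [← Real.rpow_sub ht]; ring_nf
              have htβ : 0 < t ^ β := Real.rpow_pos_of_pos ht _
              have hte : 0 < t ^ (β - (α - ε)) := Real.rpow_pos_of_pos ht _
              have h7 : t ^ β * x ^ (β - (α - ε)) ≤ t₀ ^ (β - (α - ε)) * t ^ (α - ε) := by
                calc t ^ β * x ^ (β - (α - ε))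
                    ≤ t ^ β * (t₀ ^ (β - (α - ε)) / t ^ (β - (α - ε))) := by
                      rw [← hdiv]; exact mul_le_mul_of_nonneg_left hxe htβ.le
                  _ = t₀ ^ (β - (α - ε)) * (t ^ β / t ^ (β - (α - ε))) := by ring
                  _ = t₀ ^ (β - (α - ε)) * t ^ (α - ε) := by rw [htsplit]
              have hxγ : 0 < x ^ (α - ε) := Real.rpow_pos_of_pos hx0 _
              calc t ^ β * x ^ β = (t ^ β * x ^ (β - (α - ε))) * x ^ (α - ε) := by
                    rw [hxsplit]; ring
                _ ≤ (t₀ ^ (β - (α - ε)) * t ^ (α - ε)) * x ^ (α - ε) :=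
                    mul_le_mul_of_nonneg_right h7 hxγ.le
                _ = t₀ ^ (β - (α - ε)) * (t ^ γ₀ * x ^ (α - ε)) := by rw [hγeq]; ring
                _ ≤ max 1 (t₀ ^ (β - (α - ε))) * (t ^ γ₀ * x ^ (α - ε)) :=
                    mul_le_mul_of_nonneg_right (le_max_right _ _) (by positivity)
            · have hγeq : γ₀ = β := min_eq_left hcase.le
              have hxe : x ^ β ≤ x ^ (α - ε) :=
                Real.rpow_le_rpow_of_exponent_le hx1 hcase.le
              have htβ : 0 < t ^ β := Real.rpow_pos_of_pos ht _
              calc t ^ β * x ^ β ≤ t ^ β * x ^ (α - ε) :=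
                    mul_le_mul_of_nonneg_left hxe htβ.le
                _ = 1 * (t ^ γ₀ * x ^ (α - ε)) := by rw [hγeq]; ring
                _ ≤ max 1 (t₀ ^ (β - (α - ε))) * (t ^ γ₀ * x ^ (α - ε)) :=
                    mul_le_mul_of_nonneg_right (le_max_left _ _) (by positivity)
          have hKc : C * (max 1 (t₀ ^ (β - (α - ε))) * (t ^ γ₀ * x ^ (α - ε)))
              = K * t ^ γ₀ * (c * x ^ (α - ε)) := by
            rw [hKdef]; field_simp
          calc σ (t * x) ≤ C * (t * x) ^ β := hσtx
            _ = C * (t ^ β * x ^ β) := by rw [hmul]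
            _ ≤ C * (max 1 (t₀ ^ (β - (α - ε))) * (t ^ γ₀ * x ^ (α - ε))) :=
                mul_le_mul_of_nonneg_left hclaim hC.le
            _ = K * t ^ γ₀ * (c * x ^ (α - ε)) := hKc
            _ ≤ K * t ^ γ₀ * σ x :=
                mul_le_mul_of_nonneg_left hσxlow (by positivity)
            _ ≤ 𝔠 * t ^ γ₀ * σ x :=
                mul_le_mul_of_nonneg_right
                  (mul_le_mul_of_nonneg_right h𝔠K ht₀pos.le) hσx.le
        · -- intermediate region, bounded by the sup of σ on [0, Y]
          have hσtx : σ (t * x) ≤ M := hzmax ⟨by positivity, hsmall.le⟩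
          have hD : D * (c * t₀ ^ γ₀) = M := div_mul_cancel₀ _ (by positivity)
          have he : t ^ γ₀ * x ^ γ₀ = (t * x) ^ γ₀ := (Real.mul_rpow ht.le hx0.le).symm
          have h6 : t₀ ^ γ₀ ≤ (t * x) ^ γ₀ := Real.rpow_le_rpow ht₀.le h2b hγ₀pos.le
          have hM' : M ≤ D * t ^ γ₀ * σ x := by
            calc M = D * (c * t₀ ^ γ₀) := hD.symm
              _ ≤ D * (c * (t * x) ^ γ₀) :=
                  mul_le_mul_of_nonneg_left (mul_le_mul_of_nonneg_left h6 hc.le) hD0.le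
              _ = D * t ^ γ₀ * (c * x ^ γ₀) := by rw [← he]; ring
              _ ≤ D * t ^ γ₀ * σ x :=
                  mul_le_mul_of_nonneg_left hσxlow2 (by positivity)
          calc σ (t * x) ≤ M := hσtx
            _ ≤ D * t ^ γ₀ * σ x := hM'
            _ ≤ 𝔠 * t ^ γ₀ * σ x :=
                mul_le_mul_of_nonneg_right
                  (mul_le_mul_of_nonneg_right h𝔠D ht₀pos.le) hσx.le
      calc σ (t * x) ≤ 𝔠 * t ^ γ₀ * σ x := hfinal
        _ ≤ 𝔠 * (t ^ γinf + t ^ γ₀) * σ x := by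
            refine mul_le_mul_of_nonneg_right ?_ hσx.le
            have := mul_pos h𝔠0 htinfpos
            linarith
  refine ⟨γ₀, γinf, 𝔠, 𝔞, hγ₀pos, ⟨hγinfpos, by rw [hγinfdef]; linarith⟩, h𝔠0, h𝔞0, main, ?_⟩
  intro x hx t ht
  have h1 := main x hx t (by linarith)
  have h2 : t ^ γ₀ ≤ t ^ γinf := Real.rpow_le_rpow_of_exponent_le ht.le hγ₀γinf
  have h3 := mul_le_mul_of_nonneg_left h2 h𝔠0.le
  have h4 : σ (t * x) / σ x ≤ 𝔠 * (t ^ γinf + t ^ γinf) := by linarith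
  have h5 : 𝔠 * (t ^ γinf + t ^ γinf) = 2 * 𝔠 * t ^ γinf := by ring
  linarith
end

section
/- Negligibility of the far-past supremum for fractional Brownian motion. Let B be a fractional Brownian motion with Hurst parameter λ ∈ (0,1). Then for every C̄ > 0, t ∈ [0,∞) and v ∈ ℝ: lim_{𝒯→∞} ℙ( sup_{−∞<s<−𝒯} ( C̄·(B(t) − B(s)) − (t − s) ) > v ) = 0. -/
open MeasureTheory ProbabilityTheory Filter Topology

noncomputable section

/-- `X` is a real-valued centered Gaussian process (indexed by `ℝ`) with covariance
function `K`, under the measure `P`: every finite linear combination of its values is a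
centered Gaussian real random variable with the variance prescribed by `K`. -/
def IsCenteredGaussian1 {Ω : Type*} [MeasurableSpace Ω] (P : Measure Ω)
    (X : ℝ → Ω → ℝ) (K : ℝ → ℝ → ℝ) : Prop :=
  (∀ t, Measurable (X t)) ∧
  ∀ (k : ℕ) (t : Fin k → ℝ) (c : Fin k → ℝ),
    P.map (fun ω => ∑ a, c a * X (t a) ω)
      = gaussianReal 0 (∑ a, ∑ b, c a * c b * K (t a) (t b)).toNNReal

/-- `B` is a fractional Brownian motion with Hurst parameter `H` under `P`: a centered
Gaussian process with continuous sample paths and covariance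
`(|t|^{2H} + |s|^{2H} − |t−s|^{2H})/2`. -/
def IsFBM {Ω : Type*} [MeasurableSpace Ω] (P : Measure Ω)
    (B : ℝ → Ω → ℝ) (H : ℝ) : Prop :=
  (∀ ω, Continuous fun t => B t ω) ∧
  IsCenteredGaussian1 P B
    (fun t s => (|t| ^ (2 * H) + |s| ^ (2 * H) - |t - s| ^ (2 * H)) / 2)

section AuxLemmas


lemma gauss_tail (V : NNReal) (hV : V ≠ 0) (c : ℝ) (hc : Real.sqrt V ≤ c) :
    gaussianReal 0 V (Set.Ioi c) ≤ ENNReal.ofReal (Real.exp (-c^2 / (2*V))) := by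
  have hV0 : (0:ℝ) < V := lt_of_le_of_ne (V.coe_nonneg) (by exact_mod_cast (Ne.symm hV))
  have hc0 : 0 < c := lt_of_lt_of_le (Real.sqrt_pos.2 hV0) hc
  rw [gaussianReal_apply_eq_integral _ hV]
  apply ENNReal.ofReal_le_ofReal
  -- the comparison function
  set g : ℝ → ℝ := fun x => -Real.exp (-x^2/(2*V)) with hgdef
  set g' : ℝ → ℝ := fun x => (x/V) * Real.exp (-x^2/(2*V)) with hg'def
  have hderiv : ∀ x ∈ Set.Ici c, HasDerivAt g (g' x) x := by
    intro x _
    have h1 : HasDerivAt (fun x : ℝ => -x^2/(2*V)) (-(2*x)/(2*V)) x := by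
      have := (hasDerivAt_pow 2 x).neg.div_const (2*V)
      simpa using this
    have h2 := (Real.hasDerivAt_exp _).comp x h1
    have h3 := h2.neg
    refine HasDerivAt.congr_deriv h3 ?_
    simp only [hg'def]
    field_simp
  have hnonneg : ∀ x ∈ Set.Ioi c, 0 ≤ g' x := by
    intro x hx
    have : 0 < x := lt_trans hc0 hx
    positivity
  have htend : Tendsto g atTop (𝓝 0) := by
    rw [show (0:ℝ) = -0 by ring]
    apply Tendsto.neg
    apply Real.tendsto_exp_atBot.comp
    apply Tendsto.atBot_div_const (by positivity)
    exact tendsto_neg_atBot_iff.2 (tendsto_pow_atTop two_ne_zero)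
  have hint : IntegrableOn g' (Set.Ioi c) := integrableOn_Ioi_deriv_of_nonneg' hderiv hnonneg htend
  have hval : ∫ x in Set.Ioi c, g' x = Real.exp (-c^2/(2*V)) := by
    rw [integral_Ioi_of_hasDerivAt_of_nonneg' hderiv hnonneg htend]
    simp [hgdef]
  rw [← hval]
  apply setIntegral_mono_on ((integrable_gaussianPDFReal 0 V).restrict) hint measurableSet_Ioi
  intro x hx
  have hx0 : 0 < x := lt_trans hc0 hx
  rw [gaussianPDFReal]
  simp only [sub_zero]
  have hle : (Real.sqrt (2 * Real.pi * V))⁻¹ ≤ x / V := by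
    have h1 : Real.sqrt V ≤ Real.sqrt (2 * Real.pi * V) := by
      apply Real.sqrt_le_sqrt
      nlinarith [Real.pi_gt_three, V.coe_nonneg]
    have h2 : (Real.sqrt (2 * Real.pi * V))⁻¹ ≤ (Real.sqrt V)⁻¹ := by
      apply inv_anti₀ (Real.sqrt_pos.2 hV0) h1
    refine h2.trans ?_
    have hs : 0 < Real.sqrt ↑V := Real.sqrt_pos.2 hV0
    have hV2 : (V:ℝ) = (Real.sqrt ↑V)^2 := (Real.sq_sqrt V.coe_nonneg).symm
    have hxs : Real.sqrt ↑V ≤ x := le_of_lt (lt_of_le_of_lt hc hx)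
    rw [inv_eq_one_div, div_le_div_iff₀ hs hV0]
    nlinarith [Real.sq_sqrt V.coe_nonneg]
  exact mul_le_mul_of_nonneg_right hle (Real.exp_nonneg _)


lemma abs_tail {Ω : Type*} [MeasurableSpace Ω] (P : Measure Ω) [IsProbabilityMeasure P]
    (X : Ω → ℝ) (hX : Measurable X) (σ : ℝ) (hσ : 0 < σ)
    (hmap : P.map X = gaussianReal 0 (σ^2).toNNReal) (c : ℝ) (hc : σ ≤ c) :
    P {ω | c < |X ω|} ≤ ENNReal.ofReal (2 * Real.exp (-c^2 / (2*σ^2))) := by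
  set V : NNReal := (σ^2).toNNReal with hVdef
  have hVc : (V:ℝ) = σ^2 := Real.coe_toNNReal _ (sq_nonneg σ)
  have hV : V ≠ 0 := by
    intro h
    rw [h] at hVc
    simp at hVc
    nlinarith
  have hsqrt : Real.sqrt V = σ := by rw [hVc, Real.sqrt_sq hσ.le]
  have hXneg : P.map (fun ω => -X ω) = gaussianReal 0 V := by
    have he : (fun ω => -X ω) = (fun x : ℝ => (-1:ℝ) * x) ∘ X := by funext ω; simp
    rw [he, ← Measure.map_map (f := X) (g := fun x : ℝ => (-1:ℝ)*x) (measurable_id.const_mul (-1)) hX, hmap,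
      gaussianReal_map_const_mul]
    norm_num
  have key : ∀ (Y : Ω → ℝ), Measurable Y → P.map Y = gaussianReal 0 V →
      P {ω | c < Y ω} ≤ ENNReal.ofReal (Real.exp (-c^2 / (2*σ^2))) := by
    intro Y hY hmY
    have : {ω | c < Y ω} = Y ⁻¹' (Set.Ioi c) := rfl
    rw [this, ← Measure.map_apply hY measurableSet_Ioi, hmY]
    have := gauss_tail V hV c (hsqrt ▸ hc)
    rwa [hVc] at this
  calc P {ω | c < |X ω|} ≤ P ({ω | c < X ω} ∪ {ω | c < -X ω}) := by
        apply measure_mono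
        intro ω hω
        rcases lt_abs.1 (show c < |X ω| from hω) with h | h
        · exact Or.inl h
        · exact Or.inr h
  _ ≤ P {ω | c < X ω} + P {ω | c < -X ω} := measure_union_le _ _
  _ ≤ ENNReal.ofReal (Real.exp (-c^2 / (2*σ^2))) + ENNReal.ofReal (Real.exp (-c^2 / (2*σ^2))) := by
        gcongr
        · exact key X hX hmap
        · exact key (fun ω => -X ω) hX.neg hXneg
  _ = ENNReal.ofReal (2 * Real.exp (-c^2 / (2*σ^2))) := by
        rw [← ENNReal.ofReal_add (Real.exp_nonneg _) (Real.exp_nonneg _)]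
        ring_nf


lemma chain_s9 (g : ℝ → ℝ) (hg : Continuous g) (a : ℝ) (c : ℕ → ℝ) (hc : ∀ k, 0 ≤ c k)
    (hsum : Summable c)
    (hinc : ∀ k : ℕ, ∀ j : ℕ, j < 2^k → |g (a + (j+1)/2^k) - g (a + j/2^k)| ≤ c k) :
    ∀ s ∈ Set.Icc a (a+1), |g s - g a| ≤ ∑' k, c k := by
  have key : ∀ k : ℕ, ∀ j : ℕ, j ≤ 2^k →
      |g (a + j/2^k) - g a| ≤ ∑ i ∈ Finset.range (k+1), c i := by
    intro k
    induction k with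
    | zero =>
      intro j hj
      interval_cases j
      · simpa using hc 0
      · have := hinc 0 0 (by norm_num)
        simpa using this
    | succ k ih =>
      intro j hj
      rcases Nat.even_or_odd j with ⟨j', hj'⟩ | ⟨j', hj'⟩
      · -- even case : j = 2 j'
        subst hj'
        have hpow : 2^(k+1) = 2 * 2^k := by ring
        have hj'le : j' ≤ 2^k := by omega
        have heq : a + (↑(j' + j') : ℝ)/2^(k+1) = a + (j' : ℝ)/2^k := by
          push_cast
          ring
        rw [heq]
        refine (ih j' hj'le).trans ?_
        exact Finset.sum_le_sum_of_subset_of_nonneg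
          (Finset.range_subset_range.2 (by omega)) (fun i _ _ => hc i)
      · -- odd case : j = 2 j' + 1
        subst hj'
        have hpow : 2^(k+1) = 2 * 2^k := by ring
        have hj'lt : j' < 2^k := by omega
        have h1 := hinc (k+1) (2*j') (by omega)
        have h2 := ih j' hj'lt.le
        have heq1 : a + ((2*j' : ℕ) : ℝ)/2^(k+1) = a + (j' : ℝ)/2^k := by
          push_cast; ring
        have heq2 : ((2*j' + 1 : ℕ) : ℝ) = ((2*j' : ℕ) : ℝ) + 1 := by push_cast; ring
        rw [heq2]
        calc |g (a + (((2*j' : ℕ) : ℝ) + 1)/2^(k+1)) - g a|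
            ≤ |g (a + (((2*j' : ℕ) : ℝ) + 1)/2^(k+1)) - g (a + ((2*j' : ℕ) : ℝ)/2^(k+1))|
              + |g (a + ((2*j' : ℕ) : ℝ)/2^(k+1)) - g a| := abs_sub_le _ _ _
        _ ≤ c (k+1) + ∑ i ∈ Finset.range (k+1), c i := by
              apply add_le_add
              · exact h1
              · rw [heq1]; exact h2
        _ = ∑ i ∈ Finset.range (k+2), c i := by
              show _ = ∑ i ∈ Finset.range ((k+1)+1), c i
              rw [Finset.sum_range_succ _ (k+1), add_comm]
  intro s hs
  obtain ⟨hs1, hs2⟩ := hs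
  set u : ℕ → ℝ := fun k => a + (⌊(s - a) * 2^k⌋₊ : ℝ)/2^k with hu
  have hsa : 0 ≤ s - a := by linarith
  have hjle : ∀ k, ⌊(s - a) * 2^k⌋₊ ≤ 2^k := by
    intro k
    apply Nat.floor_le_of_le
    have : (s - a) * 2^k ≤ 1 * 2^k := by
      apply mul_le_mul_of_nonneg_right (by linarith) (by positivity)
    simpa using this
  have hdist : ∀ k, |u k - s| ≤ ((2:ℝ)^k)⁻¹ := by
    intro k
    have h2k : (0:ℝ) < 2^k := by positivity
    have hfl : (⌊(s - a) * 2^k⌋₊ : ℝ) ≤ (s - a) * 2^k := Nat.floor_le (by positivity)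
    have hfu : (s - a) * 2^k < ⌊(s - a) * 2^k⌋₊ + 1 := Nat.lt_floor_add_one _
    have hA : (⌊(s - a) * 2^k⌋₊ : ℝ)/2^k ≤ s - a := by
      rw [div_le_iff₀ h2k]; exact hfl
    have hB : s - a < (⌊(s - a) * 2^k⌋₊ : ℝ)/2^k + ((2:ℝ)^k)⁻¹ := by
      have hB' : s - a < ((⌊(s - a) * 2^k⌋₊ : ℝ) + 1)/2^k := (lt_div_iff₀ h2k).2 hfu
      have : ((⌊(s - a) * 2^k⌋₊ : ℝ) + 1)/2^k
          = (⌊(s - a) * 2^k⌋₊ : ℝ)/2^k + ((2:ℝ)^k)⁻¹ := by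
        field_simp
      linarith
    have hinv : (0:ℝ) ≤ ((2:ℝ)^k)⁻¹ := by positivity
    have hueq : u k = a + (⌊(s - a) * 2^k⌋₊ : ℝ)/2^k := rfl
    rw [hueq, abs_le]
    constructor <;> linarith
  have hut : Tendsto u atTop (𝓝 s) := by
    have h2 : Tendsto (fun k : ℕ => ((2:ℝ)⁻¹)^k) atTop (𝓝 0) :=
      tendsto_pow_atTop_nhds_zero_of_lt_one (by norm_num) (by norm_num)
    have hb : ∀ k : ℕ, dist (u k) s ≤ ((2:ℝ)⁻¹)^k := fun k => by
      rw [Real.dist_eq, inv_pow]; exact hdist k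
    rw [tendsto_iff_dist_tendsto_zero]
    exact squeeze_zero (fun k => dist_nonneg) hb h2
  have hbd : ∀ k, |g (u k) - g a| ≤ ∑' i, c i := by
    intro k
    refine (key k _ (hjle k)).trans ?_
    exact Summable.sum_le_tsum _ (fun i _ => hc i) hsum
  have hgt : Tendsto (fun k => |g (u k) - g a|) atTop (𝓝 |g s - g a|) := by
    have h1 : Tendsto (fun k => g (u k) - g a) atTop (𝓝 (g s - g a)) :=
      ((hg.tendsto s).comp hut).sub (tendsto_const_nhds (x := g a))
    exact h1.abs
  exact le_of_tendsto hgt (Eventually.of_forall hbd)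


lemma aux_summable_exp_rpow {ε : ℝ} (hε : 0 < ε) :
    Summable (fun n : ℕ => Real.exp (-(((n:ℝ)+1) ^ ε) / 2)) := by
  obtain ⟨m, hm⟩ := exists_nat_ge (2/ε)
  have hsum : Summable (fun n : ℕ => ((2:ℝ)^m * m.factorial) * (1/((n:ℝ)+1)^2)) := by
    apply Summable.mul_left
    have h1 : Summable (fun n : ℕ => 1/((n:ℝ))^2) :=
      Real.summable_one_div_nat_pow.2 (by norm_num)
    have h2 := (summable_nat_add_iff 1).2 h1
    apply h2.congr
    intro n
    push_cast
    ring
  apply Summable.of_nonneg_of_le (fun n => Real.exp_nonneg _) ?_ hsum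
  intro n
  set x : ℝ := ((n:ℝ)+1) ^ ε with hxdef
  have hn1 : (1:ℝ) ≤ (n:ℝ)+1 := by have := Nat.cast_nonneg (α := ℝ) n; linarith
  have hx : 0 ≤ x := Real.rpow_nonneg (by positivity) _
  have hεm : 2 ≤ ε * m := by
    rw [div_le_iff₀ hε] at hm
    linarith [hm]
  have hxm : ((n:ℝ)+1)^(2:ℝ) ≤ x^m := by
    rw [hxdef, ← Real.rpow_natCast (((n:ℝ)+1) ^ ε) m, ← Real.rpow_mul (by positivity)]
    exact Real.rpow_le_rpow_of_exponent_le hn1 (by linarith)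
  have h2 : (x/2)^m / m.factorial ≤ Real.exp (x/2) := by
    calc (x/2)^m / m.factorial ≤ ∑ i ∈ Finset.range (m+1), (x/2)^i / i.factorial := by
          apply Finset.single_le_sum (f := fun i => (x/2)^i / (i.factorial : ℝ))
            (fun i _ => by positivity) (Finset.self_mem_range_succ m)
    _ ≤ Real.exp (x/2) := Real.sum_le_exp_of_nonneg (by positivity) (m+1)
  have hpos : (0:ℝ) < ((n:ℝ)+1)^2 / (2^m * m.factorial) := by positivity
  have h3 : ((n:ℝ)+1)^2 / (2^m * m.factorial) ≤ Real.exp (x/2) := by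
    refine le_trans ?_ h2
    rw [div_pow, div_div]
    apply div_le_div_of_nonneg_right ?_ (by positivity)
    · calc ((n:ℝ)+1)^2 = ((n:ℝ)+1)^(2:ℝ) := by
            rw [← Real.rpow_natCast ((n:ℝ)+1) 2]; norm_num
      _ ≤ x^m := hxm
  calc Real.exp (-x/2) = (Real.exp (x/2))⁻¹ := by
        rw [← Real.exp_neg]; ring_nf
  _ ≤ (((n:ℝ)+1)^2 / (2^m * m.factorial))⁻¹ := by
        apply inv_anti₀ hpos h3
  _ = (2:ℝ)^m * m.factorial * (1/((n:ℝ)+1)^2) := by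
        rw [one_div, inv_div]
        ring
  -- done

lemma aux_summable_geom : Summable (fun n : ℕ => Real.exp (-((n:ℝ)+1)/2)) := by
  have hr0 : (0:ℝ) ≤ Real.exp (-(1:ℝ)/2) := Real.exp_nonneg _
  have hr1 : Real.exp (-(1:ℝ)/2) < 1 := Real.exp_lt_one_iff.2 (by norm_num)
  have h := (summable_geometric_of_lt_one hr0 hr1).mul_right (Real.exp (-(1:ℝ)/2))
  apply h.congr
  intro n
  rw [← Real.exp_nat_mul, ← Real.exp_add]
  congr 1
  push_cast
  ring

lemma aux_summable_kr {r : ℝ} (h0 : 0 ≤ r) (h1 : r < 1) :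
    Summable (fun k : ℕ => ((k:ℝ)+1) * r^k) := by
  have h := summable_pow_mul_geometric_of_norm_lt_one 1
    (by rwa [Real.norm_eq_abs, abs_of_nonneg h0] : ‖r‖ < 1)
  have h2 := summable_geometric_of_lt_one h0 h1
  apply (h.add h2).congr
  intro k
  push_cast
  ring

lemma aux_tendsto (b C : ℝ) (hb0 : 0 < b) (hb1 : b < 1) :
    Tendsto (fun n : ℕ => (n:ℝ) - C * ((n:ℝ)+1)^b) atTop atTop := by
  have hcomp : Tendsto (fun n : ℕ => ((n:ℝ)+1)) atTop atTop :=
    tendsto_atTop_add_const_right atTop 1 tendsto_natCast_atTop_atTop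
  have h0 : Tendsto (fun n : ℕ => C * ((n:ℝ)+1)^(b-1)) atTop (𝓝 (C*0)) := by
    apply Tendsto.const_mul
    have := tendsto_rpow_neg_atTop (y := 1 - b) (by linarith)
    have h2 := this.comp hcomp
    apply h2.congr
    intro n
    simp only [Function.comp_apply]
    congr 1
    ring
  rw [mul_zero] at h0
  have hev : ∀ᶠ n : ℕ in atTop, (n:ℝ)/2 - 1 ≤ (n:ℝ) - C * ((n:ℝ)+1)^b := by
    have hle : ∀ᶠ n : ℕ in atTop, C * ((n:ℝ)+1)^(b-1) ≤ 1/2 :=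
      h0.eventually (eventually_le_nhds (by norm_num))
    filter_upwards [hle] with n hn
    have hsplit : ((n:ℝ)+1)^b = (((n:ℝ)+1)^(b-1)) * ((n:ℝ)+1) := by
      rw [← Real.rpow_add_one (by positivity : ((n:ℝ)+1) ≠ 0) (b-1)]
      norm_num
    have : C * ((n:ℝ)+1)^b ≤ (((n:ℝ)+1))/2 := by
      rw [hsplit, ← mul_assoc]
      calc C * ((n:ℝ)+1)^(b-1) * ((n:ℝ)+1) ≤ (1/2) * ((n:ℝ)+1) :=
            mul_le_mul_of_nonneg_right hn (by positivity)
      _ = ((n:ℝ)+1)/2 := by ring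
    linarith
  apply tendsto_atTop_mono' _ hev
  apply tendsto_atTop_add_const_right
  exact (tendsto_natCast_atTop_atTop).atTop_div_const (by norm_num)


lemma fbm_map_sub {Ω : Type*} [MeasurableSpace Ω] (P : Measure Ω)
    {B : ℝ → Ω → ℝ} {lam : ℝ} (hlam : 0 < lam) (hB : IsFBM P B lam)
    (u w : ℝ) :
    P.map (fun ω => B u ω - B w ω) = gaussianReal 0 ((|u - w| ^ (2*lam)).toNNReal) := by
  have h := hB.2.2 2 ![u, w] ![1, -1]
  have hf : (fun ω => ∑ a, (![(1:ℝ), -1]) a * B ((![u, w]) a) ω)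
      = fun ω => B u ω - B w ω := by
    funext ω
    simp [Fin.sum_univ_two]
    ring
  have hvar : (∑ a, ∑ b, (![(1:ℝ), -1]) a * (![(1:ℝ), -1]) b *
      ((|(![u,w]) a| ^ (2*lam) + |(![u,w]) b| ^ (2*lam) - |(![u,w]) a - (![u,w]) b| ^ (2*lam)) / 2))
      = |u - w| ^ (2*lam) := by
    have he : (2*lam) ≠ 0 := by positivity
    simp [Fin.sum_univ_two, sub_self, abs_zero, Real.zero_rpow he, abs_sub_comm w u]
    ring
  rw [hf] at h
  rw [h]
  congr 1
  rw [← hvar]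

lemma fbm_map_single {Ω : Type*} [MeasurableSpace Ω] (P : Measure Ω)
    {B : ℝ → Ω → ℝ} {lam : ℝ} (hlam : 0 < lam) (hB : IsFBM P B lam)
    (u : ℝ) :
    P.map (B u) = gaussianReal 0 ((|u| ^ (2*lam)).toNNReal) := by
  have h := hB.2.2 1 ![u] ![1]
  have hf : (fun ω => ∑ a, (![(1:ℝ)]) a * B ((![u]) a) ω) = B u := by
    funext ω
    simp
  have hvar : (∑ a : Fin 1, ∑ b : Fin 1, (![(1:ℝ)]) a * (![(1:ℝ)]) b *
      ((|(![u]) a| ^ (2*lam) + |(![u]) b| ^ (2*lam) - |(![u]) a - (![u]) b| ^ (2*lam)) / 2))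
      = |u| ^ (2*lam) := by
    have he : (2*lam) ≠ 0 := by positivity
    simp [Fin.sum_univ_one, sub_self, abs_zero, Real.zero_rpow he]
  rw [hf] at h
  rw [h]
  congr 1
  rw [← hvar]

end AuxLemmas

set_option maxHeartbeats 1000000 in
/-- **Negligibility of the far-past supremum for fractional Brownian motion.** For a
fractional Brownian motion `B` with Hurst parameter `λ ∈ (0,1)` and every `C̄ > 0`,
`t ≥ 0`, `v ∈ ℝ`:
`ℙ( sup_{−∞<s<−𝒯} ( C̄ (B(t) − B(s)) − (t − s) ) > v ) → 0` as `𝒯 → ∞`. -/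
theorem fbm_sup_tail
    {Ω : Type*} [MeasurableSpace Ω] (P : Measure Ω) [IsProbabilityMeasure P]
    (lam : ℝ) (hlam : lam ∈ Set.Ioo (0:ℝ) 1)
    (B : ℝ → Ω → ℝ) (hB : IsFBM P B lam)
    (Cbar : ℝ) (hCbar : 0 < Cbar) (t : ℝ) (ht : 0 ≤ t) (v : ℝ) :
    Tendsto (fun 𝒯 : ℝ =>
        (P {ω | v < ⨆ s : Set.Iio (-𝒯),
            (Cbar * (B t ω - B (↑s) ω) - (t - ↑s))}).toReal)
      atTop (𝓝 0) := by
  obtain ⟨hlam0, hlam1⟩ := hlam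
  have hcont := hB.1
  have hmeas := hB.2.1
  -- basic constants
  set β : ℝ := (1 + lam)/2 with hβdef
  have hβ0 : 0 < β := by rw [hβdef]; linarith
  have hβ1 : β < 1 := by rw [hβdef]; linarith
  have hβhalf : (1/2 : ℝ) ≤ β := by rw [hβdef]; linarith
  have hlamβ : lam ≤ β := by rw [hβdef]; linarith
  set r : ℝ := (2:ℝ) ^ (-lam) with hrdef
  have hr0 : 0 < r := Real.rpow_pos_of_pos (by norm_num) _
  have hr1 : r < 1 := Real.rpow_lt_one_of_one_lt_of_neg (by norm_num) (by linarith)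
  have hSsum : Summable (fun k : ℕ => ((k:ℝ)+1) * r^k) := aux_summable_kr hr0.le hr1
  set S : ℝ := ∑' k : ℕ, ((k:ℝ)+1) * r^k with hSdef
  have hS0 : 0 ≤ S := tsum_nonneg (fun k => mul_nonneg (by positivity) (pow_nonneg hr0.le k))
  have idD : ∀ k : ℕ, ((2:ℝ)^k)⁻¹ ^ lam = r^k := by
    intro k
    have h1 : ((2:ℝ)^(k:ℕ))⁻¹ = (2:ℝ) ^ (-(k:ℝ)) := by
      rw [← Real.rpow_natCast (2:ℝ) k, ← Real.rpow_neg (by norm_num)]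
    rw [h1, hrdef, ← Real.rpow_natCast ((2:ℝ)^(-lam)) k,
      ← Real.rpow_mul (by norm_num), ← Real.rpow_mul (by norm_num)]
    congr 1
    ring
  -- the events
  set a : ℕ → ℝ := fun n => -(n:ℝ)-1 with hadef
  set G : (n : ℕ) → (k : ℕ) → Fin (2^k) → Set Ω := fun n k j =>
    {ω | Real.sqrt ((n:ℝ)+1) * (((k:ℝ)+1) * r^k)
        < |B (a n + (((j:ℕ):ℝ)+1)/2^k) ω - B (a n + ((j:ℕ):ℝ)/2^k) ω|} with hGdef
  set D : ℕ → Set Ω := fun n =>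
    {ω | ((n:ℝ)+1)^β < |B (a n) ω|} ∪ ⋃ (k : ℕ), ⋃ (j : Fin (2^k)), G n k j with hDdef
  -- probability bound on the increment events
  have hGb : ∀ n k : ℕ, ∀ j : Fin (2^k),
      P (G n k j) ≤ ENNReal.ofReal (2 * Real.exp (-(((n:ℝ)+1) * ((k:ℝ)+1)^2)/2)) := by
    intro n k j
    set x : ℝ := (n:ℝ)+1 with hxdef
    have hx : (0:ℝ) < x := by rw [hxdef]; positivity
    set u : ℝ := a n + (((j:ℕ):ℝ)+1)/2^k with hudef
    set w : ℝ := a n + ((j:ℕ):ℝ)/2^k with hwdef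
    have habs : |u - w| = ((2:ℝ)^k)⁻¹ := by
      have : u - w = ((2:ℝ)^k)⁻¹ := by
        rw [hudef, hwdef]
        field_simp
        ring
      rw [this, abs_of_pos (by positivity)]
    set σ : ℝ := r^k with hσdef
    have hσ : 0 < σ := pow_pos hr0 k
    have hσeq : |u - w| ^ (2*lam) = σ^2 := by
      rw [habs, hσdef, ← idD k, ← Real.rpow_natCast (((2:ℝ)^k)⁻¹ ^ lam) 2,
        ← Real.rpow_mul (by positivity)]
      congr 1
      push_cast
      ring
    have hmap : P.map (fun ω => B u ω - B w ω) = gaussianReal 0 ((σ^2).toNNReal) := by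
      rw [fbm_map_sub P hlam0 hB u w, hσeq]
    have hsqrt1 : (1:ℝ) ≤ Real.sqrt x := by
      rw [show (1:ℝ) = Real.sqrt 1 by simp]
      apply Real.sqrt_le_sqrt
      rw [hxdef]
      have := Nat.cast_nonneg (α := ℝ) n
      linarith
    have hk1 : (1:ℝ) ≤ (k:ℝ)+1 := by
      have := Nat.cast_nonneg (α := ℝ) k
      linarith
    set c : ℝ := Real.sqrt x * (((k:ℝ)+1) * r^k) with hcdef
    have hc : σ ≤ c := by
      rw [hσdef, hcdef]
      have h1 : (1:ℝ) * r^k ≤ ((k:ℝ)+1) * r^k :=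
        mul_le_mul_of_nonneg_right hk1 (pow_pos hr0 k).le
      have h2 : (1:ℝ) * (((k:ℝ)+1) * r^k) ≤ Real.sqrt x * (((k:ℝ)+1) * r^k) :=
        mul_le_mul_of_nonneg_right hsqrt1
          (mul_nonneg (by linarith) (pow_nonneg hr0.le k))
      linarith
    have htail := abs_tail P (fun ω => B u ω - B w ω) ((hmeas u).sub (hmeas w)) σ hσ hmap c hc
    have hexp : c^2 / (2*σ^2) = (x * ((k:ℝ)+1)^2)/2 := by
      have hc2 : c^2 = x * (((k:ℝ)+1)^2 * σ^2) := by
        rw [hcdef, hσdef, mul_pow, mul_pow, Real.sq_sqrt hx.le]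
      rw [hc2]
      field_simp
    calc P (G n k j) ≤ ENNReal.ofReal (2 * Real.exp (-c^2 / (2*σ^2))) := htail
    _ = ENNReal.ofReal (2 * Real.exp (-(x * ((k:ℝ)+1)^2)/2)) := by
        congr 2
        rw [neg_div, neg_div, hexp]
  -- bound on the union over k and j
  have hq0 : (0:ℝ) ≤ 2 * Real.exp (-1) := by positivity
  have hqE : (2 * Real.exp (-1)) * Real.exp 1 = 2 := by
    rw [Real.exp_neg]
    field_simp
  have hE9 := Real.exp_one_gt_d9
  have hEpos := Real.exp_pos 1
  have hq1 : 2 * Real.exp (-1) < 1 := by nlinarith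
  have hq34 : 2 * Real.exp (-1) ≤ 3/4 := by nlinarith
  have hUnion : ∀ n : ℕ, P (⋃ (k : ℕ), ⋃ (j : Fin (2^k)), G n k j)
      ≤ ENNReal.ofReal (16 * Real.exp (-((n:ℝ)+1)/2)) := by
    intro n
    set x : ℝ := (n:ℝ)+1 with hxdef
    have hx1 : (1:ℝ) ≤ x := by
      rw [hxdef]
      have := Nat.cast_nonneg (α := ℝ) n
      linarith
    calc P (⋃ (k : ℕ), ⋃ (j : Fin (2^k)), G n k j)
        ≤ ∑' k : ℕ, P (⋃ (j : Fin (2^k)), G n k j) := measure_iUnion_le _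
    _ ≤ ∑' k : ℕ, ENNReal.ofReal (4 * Real.exp (-x/2) * (2*Real.exp (-1))^k) := by
        apply ENNReal.tsum_le_tsum
        intro k
        calc P (⋃ (j : Fin (2^k)), G n k j)
            ≤ ∑' (j : Fin (2^k)), P (G n k j) := measure_iUnion_le _
        _ ≤ ∑' (_j : Fin (2^k)), ENNReal.ofReal (2 * Real.exp (-(x * ((k:ℝ)+1)^2)/2)) :=
            ENNReal.tsum_le_tsum (fun j => hGb n k j)
        _ = (2:ENNReal)^k * ENNReal.ofReal (2 * Real.exp (-(x * ((k:ℝ)+1)^2)/2)) := by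
            rw [tsum_fintype, Finset.sum_const, Finset.card_univ, Fintype.card_fin, nsmul_eq_mul]
            congr 1
            norm_cast
        _ = ENNReal.ofReal ((2:ℝ)^k * (2 * Real.exp (-(x * ((k:ℝ)+1)^2)/2))) := by
            rw [ENNReal.ofReal_mul (by positivity : (0:ℝ) ≤ (2:ℝ)^k),
              ENNReal.ofReal_pow (by norm_num : (0:ℝ) ≤ 2), ENNReal.ofReal_ofNat]
        _ ≤ ENNReal.ofReal (4 * Real.exp (-x/2) * (2*Real.exp (-1))^k) := by
            apply ENNReal.ofReal_le_ofReal
            have hk0 : (0:ℝ) ≤ (k:ℝ) := Nat.cast_nonneg k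
            have hmono : Real.exp (-(x * ((k:ℝ)+1)^2)/2) ≤ Real.exp (-x/2 - (k:ℝ)) := by
              apply Real.exp_le_exp.2
              nlinarith [mul_le_mul_of_nonneg_right hx1 hk0, sq_nonneg (k:ℝ),
                mul_nonneg (mul_nonneg (by linarith : (0:ℝ) ≤ x) hk0) hk0]
            have hpow : (2*Real.exp (-1))^k = (2:ℝ)^k * Real.exp (-(k:ℝ)) := by
              rw [mul_pow, ← Real.exp_nat_mul]
              congr 2
              ring
            calc (2:ℝ)^k * (2 * Real.exp (-(x * ((k:ℝ)+1)^2)/2))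
                ≤ (2:ℝ)^k * (2 * Real.exp (-x/2 - (k:ℝ))) := by
                  apply mul_le_mul_of_nonneg_left _ (by positivity)
                  exact mul_le_mul_of_nonneg_left hmono (by norm_num)
            _ ≤ 4 * Real.exp (-x/2) * (2*Real.exp (-1))^k := by
                  rw [hpow, Real.exp_sub, Real.exp_neg (k:ℝ), div_eq_mul_inv]
                  have hT : (0:ℝ) < Real.exp (-x/2) * (Real.exp ((k:ℝ)))⁻¹ * (2:ℝ)^k := by
                    positivity
                  nlinarith [hT]
    _ = ENNReal.ofReal (∑' k : ℕ, 4 * Real.exp (-x/2) * (2*Real.exp (-1))^k) := by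
        rw [ENNReal.ofReal_tsum_of_nonneg (fun k => by positivity)]
        exact (summable_geometric_of_lt_one hq0 hq1).mul_left _
    _ ≤ ENNReal.ofReal (16 * Real.exp (-x/2)) := by
        apply ENNReal.ofReal_le_ofReal
        rw [tsum_mul_left, tsum_geometric_of_lt_one hq0 hq1]
        have hinv : (1 - 2*Real.exp (-1))⁻¹ ≤ 4 := by
          have h14 : (1/4:ℝ) ≤ 1 - 2*Real.exp (-1) := by linarith
          calc (1 - 2*Real.exp (-1))⁻¹ ≤ ((1:ℝ)/4)⁻¹ :=
                inv_anti₀ (by norm_num) h14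
          _ = 4 := by norm_num
        have he2 : (0:ℝ) < Real.exp (-x/2) := Real.exp_pos _
        nlinarith
  -- bound on the endpoint event
  have hEnd : ∀ n : ℕ, P {ω | ((n:ℝ)+1)^β < |B (a n) ω|}
      ≤ ENNReal.ofReal (2 * Real.exp (-(((n:ℝ)+1) ^ (1-lam)) / 2)) := by
    intro n
    set x : ℝ := (n:ℝ)+1 with hxdef
    have hx : (0:ℝ) < x := by rw [hxdef]; positivity
    have hx1 : (1:ℝ) ≤ x := by
      rw [hxdef]
      have := Nat.cast_nonneg (α := ℝ) n
      linarith
    set σ : ℝ := x ^ lam with hσdef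
    have hσ : 0 < σ := Real.rpow_pos_of_pos hx _
    have hσeq : |a n| ^ (2*lam) = σ^2 := by
      have habs : |a n| = x := by
        rw [hadef]
        simp only
        rw [show -(n:ℝ)-1 = -x by rw [hxdef]; ring, abs_neg, abs_of_pos hx]
      rw [habs, hσdef, ← Real.rpow_natCast (x ^ lam) 2, ← Real.rpow_mul hx.le]
      norm_num
      rw [mul_comm]
    have hmap : P.map (B (a n)) = gaussianReal 0 ((σ^2).toNNReal) := by
      rw [fbm_map_single P hlam0 hB (a n), hσeq]
    set c : ℝ := x ^ β with hcdef
    have hc : σ ≤ c := Real.rpow_le_rpow_of_exponent_le hx1 hlamβ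
    have htail := abs_tail P (B (a n)) (hmeas (a n)) σ hσ hmap c hc
    have hexp : c^2 / (2*σ^2) = x ^ (1-lam) / 2 := by
      have hc2 : c^2 = x ^ (1+lam) := by
        rw [hcdef, ← Real.rpow_natCast (x ^ β) 2, ← Real.rpow_mul hx.le]
        congr 1
        rw [hβdef]
        push_cast
        ring
      have hσ2 : σ^2 = x ^ (2*lam) := by
        rw [hσdef, ← Real.rpow_natCast (x ^ lam) 2, ← Real.rpow_mul hx.le]
        congr 1
        push_cast
        ring
      rw [hc2, hσ2]
      rw [show x ^ (1-lam) = x ^ (1+lam) / x ^ (2*lam) by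
        rw [← Real.rpow_sub hx]; congr 1; ring]
      have hpos : (0:ℝ) < x ^ (2*lam) := Real.rpow_pos_of_pos hx _
      rw [div_div, mul_comm]
    calc P {ω | ((n:ℝ)+1)^β < |B (a n) ω|} ≤ ENNReal.ofReal (2 * Real.exp (-c^2 / (2*σ^2))) :=
          htail
    _ = ENNReal.ofReal (2 * Real.exp (-(x ^ (1-lam)) / 2)) := by
        congr 2
        rw [neg_div, neg_div, hexp]
  -- total bound and Borel–Cantelli
  set bn : ℕ → ℝ := fun n =>
    2 * Real.exp (-(((n:ℝ)+1) ^ (1-lam)) / 2) + 16 * Real.exp (-((n:ℝ)+1)/2) with hbndef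
  have hbnsum : Summable bn := by
    apply Summable.add
    · exact (aux_summable_exp_rpow (by linarith : (0:ℝ) < 1 - lam)).mul_left 2
    · exact aux_summable_geom.mul_left 16
  have hDb : ∀ n, P (D n) ≤ ENNReal.ofReal (bn n) := by
    intro n
    calc P (D n) ≤ P {ω | ((n:ℝ)+1)^β < |B (a n) ω|}
        + P (⋃ (k : ℕ), ⋃ (j : Fin (2^k)), G n k j) := measure_union_le _ _
    _ ≤ ENNReal.ofReal (2 * Real.exp (-(((n:ℝ)+1) ^ (1-lam)) / 2))
        + ENNReal.ofReal (16 * Real.exp (-((n:ℝ)+1)/2)) := add_le_add (hEnd n) (hUnion n)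
    _ = ENNReal.ofReal (bn n) := by
        rw [← ENNReal.ofReal_add (by positivity) (by positivity)]
  have hBC : P (Filter.limsup D atTop) = 0 := by
    apply measure_limsup_atTop_eq_zero
    have h1 : ∑' n, P (D n) ≤ ∑' n, ENNReal.ofReal (bn n) := ENNReal.tsum_le_tsum hDb
    have h2 : ∑' n, ENNReal.ofReal (bn n) = ENNReal.ofReal (∑' n, bn n) :=
      (ENNReal.ofReal_tsum_of_nonneg (fun n => by positivity) hbnsum).symm
    rw [h2] at h1
    exact ne_top_of_le_ne_top ENNReal.ofReal_ne_top h1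
  -- the rational approximation sets
  set E : ℕ → Set Ω := fun m => ⋃ q : ℚ, ⋃ (_ : (q:ℝ) < -(m:ℝ)),
    {ω | v < Cbar * (B t ω - B (q:ℝ) ω) - (t - (q:ℝ))} with hEdef
  have hEmeas : ∀ m, MeasurableSet (E m) := by
    intro m
    apply MeasurableSet.iUnion
    intro q
    apply MeasurableSet.iUnion
    intro _
    exact measurableSet_lt measurable_const
      (((measurable_const.mul ((hmeas t).sub (hmeas (q:ℝ))))).sub measurable_const)
  have hEanti : Antitone E := by
    intro m m' hmm'
    intro ω hω
    simp only [hEdef, Set.mem_iUnion] at hω ⊢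
    obtain ⟨q, hq, hωq⟩ := hω
    exact ⟨q, lt_of_lt_of_le hq (by push_cast; exact neg_le_neg (by exact_mod_cast hmm')), hωq⟩
  -- covering lemma
  have hcover : ∀ m : ℕ, ∀ 𝒯 : ℝ, (m:ℝ) ≤ 𝒯 →
      {ω | v < ⨆ s : Set.Iio (-𝒯), (Cbar * (B t ω - B (↑s) ω) - (t - ↑s))} ⊆ E m := by
    intro m 𝒯 h𝒯 ω hω
    haveI : Nonempty ↥(Set.Iio (-𝒯)) := Set.nonempty_Iio.to_subtype
    have hex : ¬ ∀ s : Set.Iio (-𝒯), Cbar * (B t ω - B (↑s) ω) - (t - ↑s) ≤ v := by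
      intro hall
      exact absurd (ciSup_le hall) (not_le.2 hω)
    obtain ⟨s, hs⟩ := not_forall.1 hex
    rw [not_le] at hs
    have hslt : (s:ℝ) < -(m:ℝ) := lt_of_lt_of_le s.2 (neg_le_neg h𝒯)
    have hca : ContinuousAt (fun s' : ℝ => Cbar * (B t ω - B s' ω) - (t - s')) (s:ℝ) := by
      apply Continuous.continuousAt
      exact (continuous_const.mul (continuous_const.sub (hcont ω))).sub
        (continuous_const.sub continuous_id)
    have hev : {s' : ℝ | v < Cbar * (B t ω - B s' ω) - (t - s')} ∈ 𝓝 (s:ℝ) :=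
      hca (Ioi_mem_nhds hs)
    obtain ⟨δ, hδ0, hball⟩ := Metric.mem_nhds_iff.1 hev
    obtain ⟨q, hq1, hq2⟩ := exists_rat_btwn (sub_lt_self (s:ℝ) hδ0)
    have hqball : (q:ℝ) ∈ Metric.ball (s:ℝ) δ := by
      rw [Metric.mem_ball, Real.dist_eq, abs_sub_lt_iff]
      constructor <;> linarith
    have hqv : v < Cbar * (B t ω - B (q:ℝ) ω) - (t - (q:ℝ)) := hball hqball
    have hqm : (q:ℝ) < -(m:ℝ) := lt_trans hq2 hslt
    simp only [hEdef, Set.mem_iUnion]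
    exact ⟨q, hqm, hqv⟩
  -- intersection of the E's is inside the limsup of the D's
  have hEL : (⋂ m, E m) ⊆ Filter.limsup D atTop := by
    intro ω hω
    by_contra hL
    rw [mem_limsup_iff_frequently_mem, Filter.not_frequently] at hL
    obtain ⟨N, hN⟩ := Filter.eventually_atTop.1 hL
    -- path bound for n ≥ N
    have hpath : ∀ n : ℕ, N ≤ n → ∀ s ∈ Set.Icc (a n) (a n + 1),
        |B s ω| ≤ ((n:ℝ)+1)^β + Real.sqrt ((n:ℝ)+1) * S := by
      intro n hn s hs
      have hnot := hN n hn
      simp only [hDdef, Set.mem_union, Set.mem_iUnion, not_or, not_exists] at hnot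
      obtain ⟨hnot1, hnot2⟩ := hnot
      have hend : |B (a n) ω| ≤ ((n:ℝ)+1)^β := not_lt.1 hnot1
      have hchain := chain_s9 (fun u => B u ω) (hcont ω) (a n)
        (fun k => Real.sqrt ((n:ℝ)+1) * (((k:ℝ)+1) * r^k))
        (fun k => mul_nonneg (Real.sqrt_nonneg _)
          (mul_nonneg (by positivity) (pow_nonneg hr0.le k))) (hSsum.mul_left _) ?_ s hs
      · have htsum : ∑' k : ℕ, Real.sqrt ((n:ℝ)+1) * (((k:ℝ)+1) * r^k)
            = Real.sqrt ((n:ℝ)+1) * S := by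
          rw [hSdef, tsum_mul_left]
        rw [htsum] at hchain
        calc |B s ω| ≤ |B s ω - B (a n) ω| + |B (a n) ω| := by
              have := abs_sub_abs_le_abs_sub (B s ω) (B (a n) ω)
              have h2 := abs_add_le (B s ω - B (a n) ω) (B (a n) ω)
              simp only [sub_add_cancel] at h2
              exact h2
        _ ≤ Real.sqrt ((n:ℝ)+1) * S + ((n:ℝ)+1)^β := add_le_add hchain hend
        _ = ((n:ℝ)+1)^β + Real.sqrt ((n:ℝ)+1) * S := by ring
      · intro k j hj
        have := hnot2 k ⟨j, hj⟩
        rw [hGdef] at this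
        simp only [Set.mem_setOf_eq] at this
        exact not_lt.1 this
    -- eventual domination
    have hT := aux_tendsto β (Cbar*(1+S)) hβ0 hβ1
    obtain ⟨M0, hM0⟩ := Filter.eventually_atTop.1
      (Filter.tendsto_atTop.1 hT (Cbar * |B t ω| - t - v))
    set m : ℕ := max N M0 + 1 with hmdef
    have hEm := Set.mem_iInter.1 hω m
    simp only [hEdef, Set.mem_iUnion] at hEm
    obtain ⟨q, hq, hqv⟩ := hEm
    set n : ℕ := ⌊-(q:ℝ)⌋₊ with hndef
    have hm0 : (0:ℝ) ≤ (m:ℝ) := Nat.cast_nonneg m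
    have hq0 : (0:ℝ) < -(q:ℝ) := by linarith [lt_of_lt_of_le hq (by linarith : -(m:ℝ) ≤ 0)]
    have hn1 : (n:ℝ) ≤ -(q:ℝ) := Nat.floor_le hq0.le
    have hn2 : -(q:ℝ) < (n:ℝ)+1 := Nat.lt_floor_add_one _
    have hnm : m ≤ n := Nat.le_floor (le_of_lt (by exact_mod_cast (by linarith : (m:ℝ) < -(q:ℝ))))
    have hnN : N ≤ n := by omega
    have hnM0 : M0 ≤ n := by omega
    have hqIcc : (q:ℝ) ∈ Set.Icc (a n) (a n + 1) := by
      constructor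
      · rw [hadef]; simp only; linarith
      · rw [hadef]; simp only; linarith
    have hqb := hpath n hnN (q:ℝ) hqIcc
    set x : ℝ := (n:ℝ)+1 with hxdef
    have hx1 : (1:ℝ) ≤ x := by
      rw [hxdef]
      have := Nat.cast_nonneg (α := ℝ) n
      linarith
    have hsq : Real.sqrt x ≤ x ^ β := by
      rw [Real.sqrt_eq_rpow]
      exact Real.rpow_le_rpow_of_exponent_le hx1 hβhalf
    have hM0n := hM0 n hnM0
    have h1 : Cbar * (B t ω - B (q:ℝ) ω) ≤ Cbar * (|B t ω| + (x^β + Real.sqrt x * S)) := by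
      apply mul_le_mul_of_nonneg_left _ hCbar.le
      have := le_abs_self (B t ω)
      have h2 := neg_le_abs (B (q:ℝ) ω)
      linarith
    have h1' : Cbar * (|B t ω| + (x^β + Real.sqrt x * S))
        = Cbar * |B t ω| + Cbar * x^β + Cbar * (Real.sqrt x * S) := by ring
    have h2 : Real.sqrt x * S ≤ x^β * S := mul_le_mul_of_nonneg_right hsq hS0
    have h2' : Cbar * (Real.sqrt x * S) ≤ Cbar * (x^β * S) :=
      mul_le_mul_of_nonneg_left h2 hCbar.le
    have hexp : Cbar*(1+S) * x^β = Cbar * x^β + Cbar * (x^β * S) := by ring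
    have hqn : (q:ℝ) ≤ -(n:ℝ) := by linarith
    have hqv' : v < Cbar * (B t ω - B (q:ℝ) ω) - (t - (q:ℝ)) := hqv
    rw [← hxdef] at hM0n
    linarith [hqv', hM0n, h1, h1', h2', hexp, hxdef]
  -- conclusion
  have hIE : P (⋂ m, E m) = 0 :=
    le_antisymm (le_trans (measure_mono hEL) hBC.le) (by simp)
  have htendE : Tendsto (fun m => P (E m)) atTop (𝓝 0) := by
    have := tendsto_measure_iInter_atTop (μ := P) (s := E)
      (fun m => (hEmeas m).nullMeasurableSet) hEanti ⟨0, measure_ne_top P _⟩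
    rwa [hIE] at this
  have htendER : Tendsto (fun m => (P (E m)).toReal) atTop (𝓝 0) := by
    have h := (ENNReal.tendsto_toReal (by simp : (0:ENNReal) ≠ ⊤)).comp htendE
    exact h
  apply tendsto_of_tendsto_of_tendsto_of_le_of_le'
    (tendsto_const_nhds : Tendsto (fun _ : ℝ => (0:ℝ)) atTop (𝓝 0))
    (htendER.comp tendsto_nat_floor_atTop)
  · exact Filter.Eventually.of_forall (fun 𝒯 => ENNReal.toReal_nonneg)
  · filter_upwards [Filter.eventually_ge_atTop (0:ℝ)] with 𝒯 h𝒯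
    apply ENNReal.toReal_mono (measure_ne_top P _)
    exact measure_mono (hcover ⌊𝒯⌋₊ 𝒯 (Nat.floor_le h𝒯))
end
end

section
/- Covariance limit in the light-traffic regime, positive rate-ratio case. Assume σ satisfies L1 with index λ ∈ (0,1); set κ := (1−λ)⁻¹. Let δ : (x₀,∞) → (0,∞) be regularly varying at ∞ with index −κ, satisfy x δ(x) = σ(δ(x)) for all x > x₀, and δ(x) → 0 as x → ∞. Let r_i, r_j : (0,∞) → (0,∞) satisfy r_i(u) → ∞, r_j(u) → ∞ and r_j(u)/r_i(u) → 𝔯 ∈ (0,1] as u → ∞. Then for all t, s ∈ ℝ \ {0}: lim_{u→∞} [ σ²(δ(r_i(u))|t|) + σ²(δ(r_j(u))|s|) − σ²(|δ(r_i(u))t − δ(r_j(u))s|) ] / ( 2 σ(δ(r_i(u))) σ(δ(r_j(u))) ) = ( |t|^{2λ} + |𝔯^{−κ}s|^{2λ} − |t − 𝔯^{−κ}s|^{2λ} ) / ( 2 𝔯^{−κλ} ). -/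
open Filter Topology MeasureTheory

/-- Uniform convergence theorem (additive form) for continuous functions whose
increments vanish at infinity, proved via Egorov's theorem. -/
lemma uct_aux_s11 (f : ℝ → ℝ) (hf : Continuous f)
    (h : ∀ w : ℝ, Tendsto (fun v => f (v + w) - f v) atTop (𝓝 0))
    (ε Λ : ℝ) (hε : 0 < ε) (hΛ : 0 < Λ) :
    ∃ V : ℝ, ∀ v ≥ V, ∀ w : ℝ, |w| ≤ Λ → |f (v + w) - f v| ≤ ε := by
  by_contra hc
  push_neg at hc
  have hc' : ∀ n : ℕ, ∃ v : ℝ, v ≥ n ∧ ∃ w : ℝ, |w| ≤ Λ ∧ ε < |f (v + w) - f v| := by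
    intro n
    obtain ⟨v, hv, w, hw, hb⟩ := hc n
    exact ⟨v, hv, w, hw, hb⟩
  choose v hv w hw hb using hc'
  have hvtop : Tendsto v atTop atTop :=
    tendsto_atTop_mono hv tendsto_natCast_atTop_atTop
  have hv'top : Tendsto (fun n => v n + w n) atTop atTop := by
    apply tendsto_atTop_mono (g := fun n => v n + w n) (f := fun n => v n - Λ)
    · intro n
      have := abs_le.mp (hw n)
      linarith [this.1]
    · exact hvtop.atTop_add tendsto_const_nhds
  set F : ℕ → ℝ → ℝ := fun n x => f (v n + x) - f (v n) with hF
  set G : ℕ → ℝ → ℝ := fun n x => f (v n + w n + x) - f (v n + w n) with hG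
  have hFc : ∀ n, Continuous (F n) := fun n =>
    (hf.comp (continuous_const.add continuous_id)).sub continuous_const
  have hGc : ∀ n, Continuous (G n) := fun n =>
    (hf.comp (continuous_const.add continuous_id)).sub continuous_const
  have hFp : ∀ x : ℝ, Tendsto (fun n => F n x) atTop (𝓝 0) := by
    intro x
    have := (h x).comp hvtop
    exact this
  have hGp : ∀ x : ℝ, Tendsto (fun n => G n x) atTop (𝓝 0) := by
    intro x
    have := (h x).comp hv'top
    exact this
  set s : Set ℝ := Set.Icc (-(2*Λ)) (2*Λ) with hs
  have hsm : MeasurableSet s := measurableSet_Icc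
  have hsfin : volume s ≠ ⊤ := by simp [hs]
  have hΛ4 : (0:ℝ) < Λ/4 := by linarith
  obtain ⟨A, hAs, hAm, hAμ, hAu⟩ := tendstoUniformlyOn_of_ae_tendsto
    (f := F) (g := fun _ => (0:ℝ)) (μ := volume) (s := s)
    (fun n => (hFc n).stronglyMeasurable) stronglyMeasurable_const hsm hsfin
    (Filter.Eventually.of_forall (fun x _ => hFp x)) hΛ4
  obtain ⟨B, hBs, hBm, hBμ, hBu⟩ := tendstoUniformlyOn_of_ae_tendsto
    (f := G) (g := fun _ => (0:ℝ)) (μ := volume) (s := s)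
    (fun n => (hGc n).stronglyMeasurable) stronglyMeasurable_const hsm hsfin
    (Filter.Eventually.of_forall (fun x _ => hGp x)) hΛ4
  have hε2 : (0:ℝ) < ε/2 := by linarith
  obtain ⟨N1, hN1⟩ := (Metric.tendstoUniformlyOn_iff.mp hAu (ε/2) hε2).exists_forall_of_atTop
  obtain ⟨N2, hN2⟩ := (Metric.tendstoUniformlyOn_iff.mp hBu (ε/2) hε2).exists_forall_of_atTop
  set n := max N1 N2 with hn
  set T : Set ℝ := (fun x => w n + x) ⁻¹' A with hT
  have hTμ : volume T ≤ ENNReal.ofReal (Λ/4) := by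
    rw [hT]
    rw [measure_preimage_add]
    exact hAμ
  have hnotsub : ¬ (Set.Icc (0:ℝ) Λ ⊆ B ∪ T) := by
    intro hsub
    have h1 : volume (Set.Icc (0:ℝ) Λ) ≤ volume (B ∪ T) := measure_mono hsub
    have h2 : volume (B ∪ T) ≤ volume B + volume T := measure_union_le _ _
    have h3 : volume (Set.Icc (0:ℝ) Λ) = ENNReal.ofReal Λ := by
      rw [Real.volume_Icc]; norm_num
    have h4 : volume B + volume T ≤ ENNReal.ofReal (Λ/4) + ENNReal.ofReal (Λ/4) :=
      add_le_add hBμ hTμ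
    rw [← ENNReal.ofReal_add (by linarith) (by linarith)] at h4
    have h5 : ENNReal.ofReal Λ ≤ ENNReal.ofReal (Λ/4 + Λ/4) := by
      rw [← h3]; exact le_trans h1 (le_trans h2 h4)
    rw [ENNReal.ofReal_le_ofReal_iff (by linarith)] at h5
    linarith
  obtain ⟨x, hxI, hxBT⟩ := Set.not_subset.mp hnotsub
  have hx0 := hxI.1
  have hxΛ := hxI.2
  have hxB : x ∉ B := fun hxB => hxBT (Or.inl hxB)
  have hxT : x ∉ T := fun hxT => hxBT (Or.inr hxT)
  have hwn := abs_le.mp (hw n)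
  have hxs : x ∈ s := by
    rw [Set.mem_Icc]
    constructor <;> linarith
  have hwxs : w n + x ∈ s := by
    rw [Set.mem_Icc]
    constructor <;> linarith [hwn.1, hwn.2]
  have hwxA : w n + x ∉ A := hxT
  have hFbound : dist 0 (F n (w n + x)) < ε / 2 :=
    hN1 n (le_max_left _ _) (w n + x) ⟨hwxs, hwxA⟩
  have hGbound : dist 0 (G n x) < ε / 2 :=
    hN2 n (le_max_right _ _) x ⟨hxs, hxB⟩
  have hFb' : |F n (w n + x)| < ε / 2 := by
    rwa [dist_comm, Real.dist_eq, sub_zero] at hFbound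
  have hGb' : |G n x| < ε / 2 := by
    rwa [dist_comm, Real.dist_eq, sub_zero] at hGbound
  have hkey : f (v n + w n) - f (v n) = F n (w n + x) - G n x := by
    simp only [hF, hG]
    ring_nf
  have : |f (v n + w n) - f (v n)| < ε := by
    rw [hkey]
    calc |F n (w n + x) - G n x| ≤ |F n (w n + x)| + |G n x| := abs_sub _ _
      _ < ε / 2 + ε / 2 := add_lt_add hFb' hGb'
      _ = ε := by ring
  exact absurd (hb n) (not_lt.mpr (le_of_lt this))

/-- Chaining bound: a uniform increment bound on steps of length `≤ 1` gives a
linear bound for arbitrary nonnegative shifts. -/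
lemma chain_aux (f : ℝ → ℝ) (V ε₀ : ℝ)
    (h1 : ∀ v ≥ V, ∀ w : ℝ, |w| ≤ 1 → |f (v + w) - f v| ≤ ε₀) :
    ∀ v ≥ V, ∀ w ≥ (0:ℝ), |f (v + w) - f v| ≤ ε₀ * (w + 1) := by
  have hε₀ : 0 ≤ ε₀ := by
    have := h1 V le_rfl 0 (by norm_num)
    simpa using this
  have key : ∀ n : ℕ, ∀ v ≥ V, ∀ w : ℝ, 0 ≤ w → w ≤ (n:ℝ) + 1 →
      |f (v + w) - f v| ≤ ε₀ * (n + 1) := by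
    intro n
    induction n with
    | zero =>
      intro v hv w hw0 hw1
      have := h1 v hv w (abs_le.mpr ⟨by linarith, by simpa using hw1⟩)
      simpa using this
    | succ n ih =>
      intro v hv w hw0 hw1
      by_cases hcase : w ≤ n + 1
      · have := ih v hv w hw0 hcase
        have h2 : ε₀ * (n + 1) ≤ ε₀ * (n + 1 + 1) := by nlinarith
        push_cast
        push_cast at this
        linarith
      · push_neg at hcase
        push_cast
        have hw1' : 0 ≤ w - 1 := by linarith [Nat.cast_nonneg (α := ℝ) n]
        have hstep := h1 (v + (w - 1)) (by linarith) 1 (by norm_num)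
        have hih := ih v hv (w - 1) hw1' (by push_cast at hw1 ⊢; linarith)
        have heq : v + (w - 1) + 1 = v + w := by ring
        rw [heq] at hstep
        calc |f (v + w) - f v|
            = |(f (v + w) - f (v + (w - 1))) + (f (v + (w - 1)) - f v)| := by ring_nf
          _ ≤ |f (v + w) - f (v + (w - 1))| + |f (v + (w - 1)) - f v| := abs_add_le _ _
          _ ≤ ε₀ + ε₀ * (n + 1) := add_le_add hstep hih
          _ ≤ ε₀ * (n + 1 + 1) := by push_cast; nlinarith
  intro v hv w hw0
  have hfl := Nat.lt_floor_add_one w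
  have hfl2 : (⌊w⌋₊ : ℝ) ≤ w := Nat.floor_le hw0
  have := key ⌊w⌋₊ v hv w hw0 (le_of_lt hfl)
  calc |f (v + w) - f v| ≤ ε₀ * (⌊w⌋₊ + 1) := this
    _ ≤ ε₀ * (w + 1) := by nlinarith

/-- Increments along sequences tending to infinity with bounded shifts vanish,
given the uniform convergence statement. -/
lemma tendsto_incr (f : ℝ → ℝ)
    (huct : ∀ ε > (0:ℝ), ∀ Λ > (0:ℝ), ∃ V : ℝ, ∀ v ≥ V, ∀ w : ℝ, |w| ≤ Λ → |f (v + w) - f v| ≤ ε)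
    (v w : ℝ → ℝ) (hv : Tendsto v atTop atTop) (W : ℝ)
    (hw : ∀ᶠ u in atTop, |w u| ≤ W) :
    Tendsto (fun u => f (v u + w u) - f (v u)) atTop (𝓝 0) := by
  rw [NormedAddCommGroup.tendsto_nhds_zero]
  intro ε hε
  obtain ⟨V, hV⟩ := huct (ε/2) (by linarith) (|W| + 1) (by positivity)
  filter_upwards [hw, hv.eventually_ge_atTop V] with u hwu hvu
  have h1 : |w u| ≤ |W| + 1 := le_trans hwu (by linarith [le_abs_self W])
  have := hV (v u) hvu (w u) h1
  rw [Real.norm_eq_abs]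
  linarith

/-- Arithmetic bound used to show boundedness of log-ratios. -/
lemma abs_bound_aux (lam R w D lr : ℝ) (h1l : 0 < 1 - lam)
    (hId : D = lr - (1 - lam) * w) (hR : |lr| ≤ R)
    (hD : |D| ≤ (1 - lam) / 2 * (|w| + 1)) :
    |w| ≤ (2 * R + (1 - lam)) / (1 - lam) + 1 := by
  have h1 : (1 - lam) * |w| = |(1 - lam) * w| := by
    rw [abs_mul, abs_of_pos h1l]
  have h2 : |(1 - lam) * w| ≤ |lr| + |D| := by
    rw [hId]
    have := abs_sub (lr) (lr - (1 - lam) * w)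
    calc |(1 - lam) * w| = |lr - (lr - (1 - lam) * w)| := by ring_nf
      _ ≤ |lr| + |lr - (1 - lam) * w| := abs_sub _ _
  have h3 : (1 - lam) / 2 * |w| ≤ R + (1 - lam) / 2 := by nlinarith
  have h4 : |w| ≤ (2 * R + (1 - lam)) / (1 - lam) := by
    rw [le_div_iff₀ h1l]
    nlinarith
  linarith

/-- The additive-form transform of `σ`. -/
noncomputable def rvF (σ : ℝ → ℝ) (lam : ℝ) : ℝ → ℝ :=
  fun v => Real.log (σ (Real.exp (-v))) + lam * v

lemma rvF_bridge (σ : ℝ → ℝ) (lam : ℝ) (x : ℝ) (hx : 0 < x) :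
    rvF σ lam (-Real.log x) = Real.log (σ x) - lam * Real.log x := by
  simp only [rvF, neg_neg, Real.exp_log hx]
  ring

lemma rvF_uct (σ : ℝ → ℝ) (hσcont : ContinuousOn σ (Set.Ici 0))
    (hσpos : ∀ t > (0:ℝ), 0 < σ t) (lam : ℝ)
    (hL1 : ∀ t > (0:ℝ), Tendsto (fun x => σ (t * x) / σ x) (𝓝[>] 0) (𝓝 (t ^ lam))) :
    ∀ ε > (0:ℝ), ∀ Λ > (0:ℝ), ∃ V : ℝ, ∀ v ≥ V, ∀ w : ℝ,
      |w| ≤ Λ → |rvF σ lam (v + w) - rvF σ lam v| ≤ ε := by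
  have hσe : ∀ v : ℝ, 0 < σ (Real.exp (-v)) := fun v => hσpos _ (Real.exp_pos _)
  have hfc : Continuous (rvF σ lam) := by
    apply Continuous.add _ (continuous_const.mul continuous_id)
    apply Continuous.log
    · exact hσcont.comp_continuous (Real.continuous_exp.comp continuous_neg)
        (fun v => le_of_lt (Real.exp_pos _))
    · exact fun v => ne_of_gt (hσe v)
  have hP : ∀ w : ℝ, Tendsto (fun v => rvF σ lam (v + w) - rvF σ lam v) atTop (𝓝 0) := by
    intro w
    have ht0 : (0:ℝ) < Real.exp (-w) := Real.exp_pos _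
    have he : Tendsto (fun v : ℝ => Real.exp (-v)) atTop (𝓝[>] 0) := by
      apply tendsto_nhdsWithin_of_tendsto_nhds_of_eventually_within
      · exact Real.tendsto_exp_atBot.comp tendsto_neg_atTop_atBot
      · exact Filter.Eventually.of_forall (fun v => Real.exp_pos _)
    have hcomp : Tendsto (fun v : ℝ => σ (Real.exp (-w) * Real.exp (-v)) / σ (Real.exp (-v)))
        atTop (𝓝 (Real.exp (-w) ^ lam)) := (hL1 _ ht0).comp he
    have hlog : Tendsto (fun v : ℝ =>
        Real.log (σ (Real.exp (-w) * Real.exp (-v)) / σ (Real.exp (-v))))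
        atTop (𝓝 (-(lam * w))) := by
      have hcont : ContinuousAt Real.log (Real.exp (-w) ^ lam) :=
        Real.continuousAt_log (ne_of_gt (Real.rpow_pos_of_pos ht0 lam))
      have := hcont.tendsto.comp hcomp
      rw [Real.log_rpow ht0, Real.log_exp] at this
      rw [show -(lam * w) = lam * -w by ring]
      exact this
    have heq : ∀ v : ℝ, rvF σ lam (v + w) - rvF σ lam v =
        Real.log (σ (Real.exp (-w) * Real.exp (-v)) / σ (Real.exp (-v))) + lam * w := by
      intro v
      have h1 : Real.exp (-(v + w)) = Real.exp (-w) * Real.exp (-v) := by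
        rw [← Real.exp_add]; ring_nf
      have h2 : (0:ℝ) < σ (Real.exp (-w) * Real.exp (-v)) := by
        rw [← h1]; exact hσe _
      simp only [rvF, h1]
      rw [Real.log_div (ne_of_gt h2) (ne_of_gt (hσe v))]
      ring
    have : Tendsto (fun v : ℝ =>
        Real.log (σ (Real.exp (-w) * Real.exp (-v)) / σ (Real.exp (-v))) + lam * w)
        atTop (𝓝 (-(lam * w) + lam * w)) := hlog.add_const _
    rw [neg_add_cancel] at this
    exact Tendsto.congr (fun v => (heq v).symm) this
  exact fun ε hε Λ hΛ => uct_aux_s11 _ hfc hP ε Λ hε hΛ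

/-- `-log` of a positive sequence tending to `0` tends to `∞`. -/
lemma neglog_atTop (x : ℝ → ℝ) (hx0 : ∀ᶠ u in atTop, 0 < x u)
    (hx : Tendsto x atTop (𝓝 (0:ℝ))) :
    Tendsto (fun u : ℝ => -Real.log (x u)) atTop atTop := by
  have h1 : Tendsto x atTop (𝓝[>] 0) :=
    tendsto_nhdsWithin_of_tendsto_nhds_of_eventually_within x hx hx0
  have h2 : Tendsto (fun u => Real.log (x u)) atTop atBot :=
    Real.tendsto_log_nhdsGT_zero.comp h1
  exact tendsto_neg_atBot_atTop.comp h2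



/-- key ratio identity: for positive x, y,
`σ y / σ x = exp (f(-log y) - f(-log x) + lam (log y - log x))`. -/
lemma sigma_ratio_eq (σ : ℝ → ℝ) (hσpos : ∀ t > (0:ℝ), 0 < σ t) (lam : ℝ)
    (x y : ℝ) (hx : 0 < x) (hy : 0 < y) :
    σ y / σ x = Real.exp (rvF σ lam (-Real.log y) - rvF σ lam (-Real.log x)
      + lam * (Real.log y - Real.log x)) := by
  rw [rvF_bridge σ lam x hx, rvF_bridge σ lam y hy]
  have h2 : (0:ℝ) < σ y / σ x := div_pos (hσpos _ hy) (hσpos _ hx)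
  rw [← Real.exp_log h2, Real.log_div (ne_of_gt (hσpos _ hy)) (ne_of_gt (hσpos _ hx))]
  congr 1
  ring

/-- Sequential regular-variation limit with varying positive multiplier. -/
lemma sigma_ratio_tendsto (σ : ℝ → ℝ) (hσcont : ContinuousOn σ (Set.Ici 0))
    (hσpos : ∀ t > (0:ℝ), 0 < σ t) (lam : ℝ)
    (hL1 : ∀ t > (0:ℝ), Tendsto (fun x => σ (t * x) / σ x) (𝓝[>] 0) (𝓝 (t ^ lam)))
    (x c : ℝ → ℝ) (C : ℝ) (hC : 0 < C)
    (hx0 : ∀ᶠ u in atTop, 0 < x u) (hx : Tendsto x atTop (𝓝 0))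
    (hc : Tendsto c atTop (𝓝 C)) :
    Tendsto (fun u => σ (x u * c u) / σ (x u)) atTop (𝓝 (C ^ lam)) := by
  have hc0 : ∀ᶠ u in atTop, 0 < c u := hc.eventually (eventually_gt_nhds hC)
  have hv : Tendsto (fun u => -Real.log (x u)) atTop atTop := neglog_atTop x hx0 hx
  have hw : Tendsto (fun u => -Real.log (c u)) atTop (𝓝 (-Real.log C)) :=
    (((Real.continuousAt_log (ne_of_gt hC)).tendsto.comp hc).neg)
  have hwB : ∀ᶠ u in atTop, |(-Real.log (c u))| ≤ |Real.log C| + 1 := by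
    have := hw.eventually (Metric.ball_mem_nhds (-Real.log C) one_pos)
    filter_upwards [this] with u hu
    rw [Real.dist_eq] at hu
    have h2 := abs_sub_abs_le_abs_sub (-Real.log (c u)) (-Real.log C)
    rw [abs_neg] at h2 ⊢
    rw [abs_neg] at h2
    linarith
  have hincr := tendsto_incr (rvF σ lam) (rvF_uct σ hσcont hσpos lam hL1)
    (fun u => -Real.log (x u)) (fun u => -Real.log (c u)) hv (|Real.log C| + 1) hwB
  have hlam : Tendsto (fun u => lam * Real.log (c u)) atTop (𝓝 (lam * Real.log C)) :=
    ((Real.continuousAt_log (ne_of_gt hC)).tendsto.comp hc).const_mul lam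
  have hsum : Tendsto (fun u => (rvF σ lam (-Real.log (x u) + (-Real.log (c u)))
      - rvF σ lam (-Real.log (x u))) + lam * Real.log (c u)) atTop
      (𝓝 (0 + lam * Real.log C)) := hincr.add hlam
  rw [zero_add] at hsum
  have hexp : Tendsto (fun u => Real.exp ((rvF σ lam (-Real.log (x u) + (-Real.log (c u)))
      - rvF σ lam (-Real.log (x u))) + lam * Real.log (c u))) atTop
      (𝓝 (Real.exp (lam * Real.log C))) := Real.continuous_exp.continuousAt.tendsto.comp hsum
  have hval : Real.exp (lam * Real.log C) = C ^ lam := by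
    rw [Real.rpow_def_of_pos hC]; ring_nf
  rw [hval] at hexp
  apply hexp.congr'
  filter_upwards [hx0, hc0] with u hxu hcu
  have hxc : 0 < x u * c u := mul_pos hxu hcu
  rw [sigma_ratio_eq σ hσpos lam (x u) (x u * c u) hxu hxc]
  congr 1
  rw [Real.log_mul (ne_of_gt hxu) (ne_of_gt hcu)]
  ring



/-- Sequential regular-variation limit when the multiplier tends to `0`. -/
lemma sigma_ratio_zero (σ : ℝ → ℝ) (hσcont : ContinuousOn σ (Set.Ici 0))
    (hσ0 : σ 0 = 0) (hσpos : ∀ t > (0:ℝ), 0 < σ t) (lam : ℝ) (hlam0 : 0 < lam)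
    (hL1 : ∀ t > (0:ℝ), Tendsto (fun x => σ (t * x) / σ x) (𝓝[>] 0) (𝓝 (t ^ lam)))
    (x c : ℝ → ℝ)
    (hx0 : ∀ᶠ u in atTop, 0 < x u) (hx : Tendsto x atTop (𝓝 0))
    (hc0 : ∀ᶠ u in atTop, 0 ≤ c u ∧ c u ≤ 1) (hc : Tendsto c atTop (𝓝 0)) :
    Tendsto (fun u => σ (x u * c u) / σ (x u)) atTop (𝓝 0) := by
  rw [NormedAddCommGroup.tendsto_nhds_zero]
  intro ε hε
  obtain ⟨V, hV⟩ := rvF_uct σ hσcont hσpos lam hL1 (lam/2) (by linarith) 1 one_pos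
  have hch := chain_aux (rvF σ lam) V (lam/2) hV
  -- choose W such that exp (lam/2 - lam/2 * w) < ε for w ≥ W
  have hexp0 : Tendsto (fun w : ℝ => Real.exp (lam/2 - lam/2 * w)) atTop (𝓝 0) := by
    apply Real.tendsto_exp_atBot.comp
    have h1 : Tendsto (fun w : ℝ => lam/2 * w) atTop atTop :=
      Tendsto.const_mul_atTop (by linarith) tendsto_id
    have h2 : Tendsto (fun w : ℝ => -(lam/2 * w)) atTop atBot := tendsto_neg_atTop_atBot.comp h1
    have h3 := tendsto_atBot_add_const_left atTop (lam/2) h2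
    apply h3.congr
    intro w
    ring
  obtain ⟨W, hW⟩ := eventually_atTop.mp (hexp0.eventually (gt_mem_nhds hε))
  set W' : ℝ := max W 0 with hW'def
  have hv : Tendsto (fun u => -Real.log (x u)) atTop atTop := neglog_atTop x hx0 hx
  have hcsmall : ∀ᶠ u in atTop, c u < Real.exp (-(W' + 1)) :=
    hc.eventually (gt_mem_nhds (Real.exp_pos _))
  filter_upwards [hx0, hc0, hcsmall, hv.eventually_ge_atTop V] with u hxu hcu hcs hvu
  rcases eq_or_lt_of_le hcu.1 with hczero | hcpos
  · rw [← hczero, mul_zero, hσ0, zero_div, norm_zero]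
    exact hε
  · -- positive small multiplier
    set w : ℝ := -Real.log (c u) with hwdef
    have hw0 : 0 ≤ w := by
      rw [hwdef, neg_nonneg]
      exact Real.log_nonpos (le_of_lt hcpos) hcu.2
    have hwW : W ≤ w := by
      have hlt : Real.log (c u) < -(W' + 1) := by
        rw [← Real.log_exp (-(W' + 1))]
        exact Real.log_lt_log hcpos hcs
      have : W ≤ W' := le_max_left _ _
      rw [hwdef]
      linarith
    have hratio_eq : σ (x u * c u) / σ (x u) =
        Real.exp ((rvF σ lam (-Real.log (x u) + w) - rvF σ lam (-Real.log (x u))) - lam * w) := by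
      rw [sigma_ratio_eq σ hσpos lam (x u) (x u * c u) hxu (mul_pos hxu hcpos)]
      congr 1
      rw [Real.log_mul (ne_of_gt hxu) (ne_of_gt hcpos), hwdef]
      ring_nf
    have hbound := hch (-Real.log (x u)) hvu w hw0
    have habs := abs_le.mp hbound
    have hle : (rvF σ lam (-Real.log (x u) + w) - rvF σ lam (-Real.log (x u))) - lam * w ≤
        lam/2 - lam/2 * w := by nlinarith [habs.2]
    have hpos : 0 < σ (x u * c u) / σ (x u) :=
      div_pos (hσpos _ (mul_pos hxu hcpos)) (hσpos _ hxu)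
    rw [Real.norm_eq_abs, abs_of_pos hpos, hratio_eq]
    calc Real.exp _ ≤ Real.exp (lam/2 - lam/2 * w) := Real.exp_le_exp.mpr hle
      _ < ε := hW w hwW



/-- The ratio `δ(r_j)/δ(r_i)` converges to `𝔯^{-κ}`. -/
lemma delta_ratio_lim (σ : ℝ → ℝ) (hσcont : ContinuousOn σ (Set.Ici 0))
    (hσpos : ∀ t > (0:ℝ), 0 < σ t)
    (lam : ℝ) (hlam : lam ∈ Set.Ioo (0:ℝ) 1)
    (hL1 : ∀ t > (0:ℝ), Tendsto (fun x => σ (t * x) / σ x) (𝓝[>] 0) (𝓝 (t ^ lam)))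
    (x₀ : ℝ) (δ : ℝ → ℝ)
    (hδpos : ∀ x > x₀, 0 < δ x)
    (hδeq : ∀ x > x₀, x * δ x = σ (δ x))
    (hδ0 : Tendsto δ atTop (𝓝 0))
    (ri rj : ℝ → ℝ)
    (hri : Tendsto ri atTop atTop) (hrj : Tendsto rj atTop atTop)
    (𝔯 : ℝ) (h𝔯0 : 0 < 𝔯)
    (hratio : Tendsto (fun u => rj u / ri u) atTop (𝓝 𝔯)) :
    Tendsto (fun u => δ (rj u) / δ (ri u)) atTop (𝓝 (𝔯 ^ (-(1 - lam)⁻¹))) := by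
  obtain ⟨hlam0, hlam1⟩ := hlam
  have h1l : (0:ℝ) < 1 - lam := by linarith
  have ha0 : ∀ᶠ u in atTop, 0 < δ (ri u) :=
    (hri.eventually_gt_atTop x₀).mono (fun u h => hδpos _ h)
  have hb0 : ∀ᶠ u in atTop, 0 < δ (rj u) :=
    (hrj.eventually_gt_atTop x₀).mono (fun u h => hδpos _ h)
  have ha : Tendsto (fun u => δ (ri u)) atTop (𝓝 0) := hδ0.comp hri
  have hb : Tendsto (fun u => δ (rj u)) atTop (𝓝 0) := hδ0.comp hrj
  have hva : Tendsto (fun u => -Real.log (δ (ri u))) atTop atTop := neglog_atTop _ ha0 ha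
  have hvb : Tendsto (fun u => -Real.log (δ (rj u))) atTop atTop := neglog_atTop _ hb0 hb
  have hlogρ : Tendsto (fun u => Real.log (rj u / ri u)) atTop (𝓝 (Real.log 𝔯)) :=
    (Real.continuousAt_log (ne_of_gt h𝔯0)).tendsto.comp hratio
  -- the increment identity
  have hIdent : ∀ᶠ u in atTop,
      rvF σ lam (-Real.log (δ (rj u))) - rvF σ lam (-Real.log (δ (ri u))) =
      Real.log (rj u / ri u)
        - (1 - lam) * ((-Real.log (δ (rj u))) - (-Real.log (δ (ri u)))) := by
    filter_upwards [ha0, hb0, hri.eventually_gt_atTop (max x₀ 0),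
      hrj.eventually_gt_atTop (max x₀ 0)] with u hau hbu hrix hrjx
    have hriu : 0 < ri u := lt_of_le_of_lt (le_max_right _ _) hrix
    have hrju : 0 < rj u := lt_of_le_of_lt (le_max_right _ _) hrjx
    have hrix' : x₀ < ri u := lt_of_le_of_lt (le_max_left _ _) hrix
    have hrjx' : x₀ < rj u := lt_of_le_of_lt (le_max_left _ _) hrjx
    rw [rvF_bridge σ lam _ hau, rvF_bridge σ lam _ hbu,
      ← hδeq _ hrix', ← hδeq _ hrjx',
      Real.log_mul (ne_of_gt hriu) (ne_of_gt hau),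
      Real.log_mul (ne_of_gt hrju) (ne_of_gt hbu),
      Real.log_div (ne_of_gt hrju) (ne_of_gt hriu)]
    ring
  -- bound on |log ratio|
  have hRval : ∀ᶠ u in atTop, |Real.log (rj u / ri u)| ≤ |Real.log 𝔯| + 1 := by
    filter_upwards [hlogρ.eventually (Metric.ball_mem_nhds (Real.log 𝔯) one_pos)] with u hu
    rw [Real.dist_eq] at hu
    have := abs_sub_abs_le_abs_sub (Real.log (rj u / ri u)) (Real.log 𝔯)
    linarith
  -- boundedness of the log-ratio increments
  obtain ⟨V1, hV1⟩ := rvF_uct σ hσcont hσpos lam hL1 ((1 - lam)/2) (by linarith) 1 one_pos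
  have hch := chain_aux (rvF σ lam) V1 ((1 - lam)/2) hV1
  have hWbound : ∀ᶠ u in atTop,
      |(-Real.log (δ (rj u))) - (-Real.log (δ (ri u)))|
        ≤ (2 * (|Real.log 𝔯| + 1) + (1 - lam)) / (1 - lam) + 1 := by
    filter_upwards [hIdent, hRval, hva.eventually_ge_atTop V1,
      hvb.eventually_ge_atTop V1] with u hId hR hva1 hvb1
    apply abs_bound_aux lam _ _ _ _ h1l hId hR
    -- |D| ≤ (1-lam)/2 * (|w| + 1)
    rcases le_or_gt 0 ((-Real.log (δ (rj u))) - (-Real.log (δ (ri u)))) with hsg | hsg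
    · have := hch (-Real.log (δ (ri u))) hva1 _ hsg
      rw [show (-Real.log (δ (ri u))) + ((-Real.log (δ (rj u))) - (-Real.log (δ (ri u)))) =
        -Real.log (δ (rj u)) by ring] at this
      rw [abs_of_nonneg hsg]
      exact this
    · have h2 : (0:ℝ) ≤ (-Real.log (δ (ri u))) - (-Real.log (δ (rj u))) := by linarith
      have := hch (-Real.log (δ (rj u))) hvb1 _ h2
      rw [show (-Real.log (δ (rj u))) + ((-Real.log (δ (ri u))) - (-Real.log (δ (rj u)))) =
        -Real.log (δ (ri u)) by ring] at this
      rw [abs_sub_comm, abs_of_neg hsg, neg_sub]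
      exact this
  -- increments vanish
  have hD0 : Tendsto (fun u =>
      rvF σ lam (-Real.log (δ (rj u))) - rvF σ lam (-Real.log (δ (ri u)))) atTop (𝓝 0) := by
    have := tendsto_incr (rvF σ lam) (rvF_uct σ hσcont hσpos lam hL1)
      (fun u => -Real.log (δ (ri u)))
      (fun u => (-Real.log (δ (rj u))) - (-Real.log (δ (ri u)))) hva
      ((2 * (|Real.log 𝔯| + 1) + (1 - lam)) / (1 - lam) + 1) hWbound
    apply this.congr
    intro u
    rw [show (-Real.log (δ (ri u))) + ((-Real.log (δ (rj u))) - (-Real.log (δ (ri u)))) =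
      -Real.log (δ (rj u)) by ring]
  -- limit of the log-ratio
  have hwab : Tendsto (fun u => (-Real.log (δ (rj u))) - (-Real.log (δ (ri u)))) atTop
      (𝓝 (Real.log 𝔯 / (1 - lam))) := by
    have h1 : Tendsto (fun u => (Real.log (rj u / ri u) -
        (rvF σ lam (-Real.log (δ (rj u))) - rvF σ lam (-Real.log (δ (ri u))))) / (1 - lam))
        atTop (𝓝 ((Real.log 𝔯 - 0) / (1 - lam))) := (hlogρ.sub hD0).div_const _
    rw [sub_zero] at h1
    apply h1.congr'
    filter_upwards [hIdent] with u hId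
    rw [hId]
    field_simp
    ring
  -- conclude
  have hexp : Tendsto (fun u =>
      Real.exp (-((-Real.log (δ (rj u))) - (-Real.log (δ (ri u)))))) atTop
      (𝓝 (Real.exp (-(Real.log 𝔯 / (1 - lam))))) :=
    Real.continuous_exp.continuousAt.tendsto.comp hwab.neg
  have hval : Real.exp (-(Real.log 𝔯 / (1 - lam))) = 𝔯 ^ (-(1 - lam)⁻¹) := by
    rw [Real.rpow_def_of_pos h𝔯0]
    congr 1
    field_simp
  rw [hval] at hexp
  apply hexp.congr'
  filter_upwards [ha0, hb0] with u hau hbu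
  rw [show -((-Real.log (δ (rj u))) - (-Real.log (δ (ri u)))) =
    Real.log (δ (rj u)) - Real.log (δ (ri u)) by ring,
    Real.exp_sub, Real.exp_log hau, Real.exp_log hbu]

lemma sq_rpow (x y : ℝ) (hx : 0 ≤ x) (hy : y ≠ 0) : (x ^ y)^2 = x ^ (2*y) := by
  rcases eq_or_lt_of_le hx with h0 | h0
  · rw [← h0, Real.zero_rpow hy, Real.zero_rpow (mul_ne_zero two_ne_zero hy)]
    norm_num
  · rw [sq, ← Real.rpow_add h0, two_mul]

/-- **Covariance limit in the light-traffic regime, positive rate-ratio case.** Under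
L1, with `δ` regularly varying at `∞` with index `−κ` (`κ = (1−λ)⁻¹`) solving
`x δ(x) = σ(δ(x))` and `δ(x) → 0`, and rates `r_i, r_j → ∞` with
`r_j/r_i → 𝔯 ∈ (0,1]`, the normalized covariance converges to the fBm-type covariance. -/
theorem cov_limit_positive_ratio
    (σ : ℝ → ℝ) (hσcont : ContinuousOn σ (Set.Ici 0)) (hσ0 : σ 0 = 0)
    (hσpos : ∀ t > (0:ℝ), 0 < σ t)
    -- assumption L1
    (lam : ℝ) (hlam : lam ∈ Set.Ioo (0:ℝ) 1)
    (hL1 : ∀ t > (0:ℝ), Tendsto (fun x => σ (t * x) / σ x) (𝓝[>] 0) (𝓝 (t ^ lam)))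
    -- δ : regularly varying at ∞ with index −κ, solving x δ(x) = σ(δ(x)), δ → 0
    (x₀ : ℝ) (δ : ℝ → ℝ)
    (hδpos : ∀ x > x₀, 0 < δ x)
    (hδRV : ∀ t > (0:ℝ),
      Tendsto (fun x => δ (t * x) / δ x) atTop (𝓝 (t ^ (-(1 - lam)⁻¹))))
    (hδeq : ∀ x > x₀, x * δ x = σ (δ x))
    (hδ0 : Tendsto δ atTop (𝓝 0))
    -- rates
    (ri rj : ℝ → ℝ)
    (hri : Tendsto ri atTop atTop) (hrj : Tendsto rj atTop atTop)
    (𝔯 : ℝ) (h𝔯 : 𝔯 ∈ Set.Ioc (0:ℝ) 1)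
    (hratio : Tendsto (fun u => rj u / ri u) atTop (𝓝 𝔯)) :
    ∀ t s : ℝ, t ≠ 0 → s ≠ 0 →
      Tendsto (fun u =>
          (σ (δ (ri u) * |t|) ^ 2 + σ (δ (rj u) * |s|) ^ 2
              - σ (|δ (ri u) * t - δ (rj u) * s|) ^ 2)
            / (2 * σ (δ (ri u)) * σ (δ (rj u)))) atTop
        (𝓝 ((|t| ^ (2 * lam) + |𝔯 ^ (-(1 - lam)⁻¹) * s| ^ (2 * lam)
              - |t - 𝔯 ^ (-(1 - lam)⁻¹) * s| ^ (2 * lam))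
            / (2 * 𝔯 ^ (-((1 - lam)⁻¹ * lam))))) := by
  intro t s ht hs
  obtain ⟨hlam0, hlam1⟩ := hlam
  obtain ⟨h𝔯0, h𝔯1⟩ := h𝔯
  have h1l : (0:ℝ) < 1 - lam := by linarith
  have hL0 : (0:ℝ) < 𝔯 ^ (-(1 - lam)⁻¹) := Real.rpow_pos_of_pos h𝔯0 _
  have ha0 : ∀ᶠ u in atTop, 0 < δ (ri u) :=
    (hri.eventually_gt_atTop x₀).mono (fun u h => hδpos _ h)
  have hb0 : ∀ᶠ u in atTop, 0 < δ (rj u) :=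
    (hrj.eventually_gt_atTop x₀).mono (fun u h => hδpos _ h)
  have ha : Tendsto (fun u => δ (ri u)) atTop (𝓝 0) := hδ0.comp hri
  have hb : Tendsto (fun u => δ (rj u)) atTop (𝓝 0) := hδ0.comp hrj
  have hm : Tendsto (fun u => δ (rj u) / δ (ri u)) atTop (𝓝 (𝔯 ^ (-(1 - lam)⁻¹))) :=
    delta_ratio_lim σ hσcont hσpos lam ⟨hlam0, hlam1⟩ hL1 x₀ δ hδpos hδeq hδ0
      ri rj hri hrj 𝔯 h𝔯0 hratio
  -- σ-ratio of the two scales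
  have hPr : Tendsto (fun u => σ (δ (rj u)) / σ (δ (ri u))) atTop
      (𝓝 (𝔯 * 𝔯 ^ (-(1 - lam)⁻¹))) := by
    have h1 : Tendsto (fun u => (rj u / ri u) * (δ (rj u) / δ (ri u))) atTop
        (𝓝 (𝔯 * 𝔯 ^ (-(1 - lam)⁻¹))) := hratio.mul hm
    apply h1.congr'
    filter_upwards [hri.eventually_gt_atTop x₀, hrj.eventually_gt_atTop x₀] with u h1u h2u
    rw [← hδeq _ h1u, ← hδeq _ h2u, div_mul_div_comm]
  have hQ0 : (0:ℝ) < 𝔯 * 𝔯 ^ (-(1 - lam)⁻¹) := mul_pos h𝔯0 hL0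
  -- the three normalized ratios
  have hX1 : Tendsto (fun u => σ (δ (ri u) * |t|) / σ (δ (ri u))) atTop (𝓝 (|t| ^ lam)) :=
    sigma_ratio_tendsto σ hσcont hσpos lam hL1 _ _ _ (abs_pos.mpr ht) ha0 ha tendsto_const_nhds
  have hX2 : Tendsto (fun u => σ (δ (rj u) * |s|) / σ (δ (rj u))) atTop (𝓝 (|s| ^ lam)) :=
    sigma_ratio_tendsto σ hσcont hσpos lam hL1 _ _ _ (abs_pos.mpr hs) hb0 hb tendsto_const_nhds
  have hcc : Tendsto (fun u => |t - (δ (rj u) / δ (ri u)) * s|) atTop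
      (𝓝 (|t - 𝔯 ^ (-(1 - lam)⁻¹) * s|)) := (tendsto_const_nhds.sub (hm.mul_const s)).abs
  have hX3 : Tendsto (fun u => σ (δ (ri u) * |t - (δ (rj u) / δ (ri u)) * s|) / σ (δ (ri u)))
      atTop (𝓝 (|t - 𝔯 ^ (-(1 - lam)⁻¹) * s| ^ lam)) := by
    rcases eq_or_lt_of_le (abs_nonneg (t - 𝔯 ^ (-(1 - lam)⁻¹) * s)) with hc0 | hc0
    · rw [← hc0, Real.zero_rpow (ne_of_gt hlam0)]
      rw [← hc0] at hcc
      apply sigma_ratio_zero σ hσcont hσ0 hσpos lam hlam0 hL1 _ _ ha0 ha _ hcc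
      filter_upwards [hcc.eventually (gt_mem_nhds one_pos)] with u hu
      exact ⟨abs_nonneg _, le_of_lt hu⟩
    · exact sigma_ratio_tendsto σ hσcont hσpos lam hL1 _ _ _ hc0 ha0 ha hcc
  -- combine
  have hcomb : Tendsto (fun u =>
      ((σ (δ (ri u) * |t|) / σ (δ (ri u)))^2
        + (σ (δ (rj u) * |s|) / σ (δ (rj u)))^2 * (σ (δ (rj u)) / σ (δ (ri u)))^2
        - (σ (δ (ri u) * |t - (δ (rj u) / δ (ri u)) * s|) / σ (δ (ri u)))^2)
      / (2 * (σ (δ (rj u)) / σ (δ (ri u))))) atTop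
      (𝓝 (((|t| ^ lam)^2 + (|s| ^ lam)^2 * (𝔯 * 𝔯 ^ (-(1 - lam)⁻¹))^2
        - (|t - 𝔯 ^ (-(1 - lam)⁻¹) * s| ^ lam)^2) / (2 * (𝔯 * 𝔯 ^ (-(1 - lam)⁻¹))))) := by
    apply Tendsto.div
    · exact ((hX1.pow 2).add ((hX2.pow 2).mul (hPr.pow 2))).sub (hX3.pow 2)
    · exact tendsto_const_nhds.mul hPr
    · positivity
  -- identify the limit value
  have hQL : 𝔯 * 𝔯 ^ (-(1 - lam)⁻¹) = (𝔯 ^ (-(1 - lam)⁻¹)) ^ lam := by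
    rw [← Real.rpow_mul (le_of_lt h𝔯0)]
    rw [show 𝔯 * 𝔯 ^ (-(1 - lam)⁻¹) = 𝔯 ^ (1:ℝ) * 𝔯 ^ (-(1 - lam)⁻¹) by rw [Real.rpow_one],
      ← Real.rpow_add h𝔯0]
    congr 1
    field_simp
    ring
  have hQeq : 𝔯 * 𝔯 ^ (-(1 - lam)⁻¹) = 𝔯 ^ (-((1 - lam)⁻¹ * lam)) := by
    rw [show 𝔯 * 𝔯 ^ (-(1 - lam)⁻¹) = 𝔯 ^ (1:ℝ) * 𝔯 ^ (-(1 - lam)⁻¹) by rw [Real.rpow_one],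
      ← Real.rpow_add h𝔯0]
    congr 1
    field_simp
    ring
  have he1 : (|t| ^ lam)^2 = |t| ^ (2*lam) := sq_rpow _ _ (abs_nonneg t) (ne_of_gt hlam0)
  have he3 : (|t - 𝔯 ^ (-(1 - lam)⁻¹) * s| ^ lam)^2 = |t - 𝔯 ^ (-(1 - lam)⁻¹) * s| ^ (2*lam) :=
    sq_rpow _ _ (abs_nonneg _) (ne_of_gt hlam0)
  have he2 : (|s| ^ lam)^2 * (𝔯 * 𝔯 ^ (-(1 - lam)⁻¹))^2 =
      |𝔯 ^ (-(1 - lam)⁻¹) * s| ^ (2*lam) := by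
    rw [hQL, abs_mul, abs_of_pos hL0,
      Real.mul_rpow (le_of_lt hL0) (abs_nonneg s),
      ← sq_rpow (𝔯 ^ (-(1 - lam)⁻¹)) lam (le_of_lt hL0) (ne_of_gt hlam0),
      ← sq_rpow |s| lam (abs_nonneg s) (ne_of_gt hlam0)]
    ring
  rw [he1, he3, he2, hQeq] at hcomb
  -- transfer along the eventual algebraic identity
  apply hcomb.congr'
  filter_upwards [ha0, hb0] with u hau hbu
  have hσa : 0 < σ (δ (ri u)) := hσpos _ hau
  have hσb : 0 < σ (δ (rj u)) := hσpos _ hbu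
  have habs : δ (ri u) * |t - (δ (rj u) / δ (ri u)) * s| = |δ (ri u) * t - δ (rj u) * s| := by
    rw [show δ (ri u) * |t - (δ (rj u) / δ (ri u)) * s|
        = |δ (ri u)| * |t - (δ (rj u) / δ (ri u)) * s| by rw [abs_of_pos hau],
      ← abs_mul]
    congr 1
    field_simp
  rw [habs]
  field_simp
end

section
/- Convergence of the rescaled routing coefficients. Let λ ∈ (0,1), κ := (1−λ)⁻¹, and let σ : [0,∞) → [0,∞) be continuous, positive on (0,∞) and regularly varying at 0 with index λ. Let δ : (x₀,∞) → (0,∞) be regularly varying at ∞ with index −κ, satisfy x δ(x) = σ(δ(x)) for all x > x₀, and δ(x) → 0 as x → ∞. Let r_i, r_j : (0,∞) → (0,∞) satisfy r_i(u) → ∞, r_j(u) → ∞ and r_j(u)/r_i(u) → 𝔯_{ij} ∈ [0,1] as u → ∞, and let p_{ij} ≥ 0. Then lim_{u→∞} p_{ij} · (r_i(u) δ(r_i(u))) / (r_j(u) δ(r_j(u))) = p_{ij} · 𝔯_{ij}^{κλ}, where 0^{κλ} := 0; equivalently, lim_{u→∞} p_{ij} · σ(δ(r_i(u)))/σ(δ(r_j(u)))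 = p_{ij} · 𝔯_{ij}^{κλ}. -/
open Filter Topology

/-- Baire-category window lemma: if the increments of a continuous `χ` vanish at `+∞`
for every fixed shift, then there is a small window on which the increments are
uniformly small for all large arguments. -/
private lemma baire_window_s15 (χ : ℝ → ℝ) (hχ : Continuous χ)
    (h : ∀ u : ℝ, Tendsto (fun s => χ (s + u) - χ s) atTop (𝓝 0))
    {ε : ℝ} (hε : 0 < ε) :
    ∃ ℓ : ℝ, 0 < ℓ ∧ ∃ T : ℝ, ∀ s, T ≤ s → ∀ u, 0 ≤ u → u ≤ ℓ → |χ (s + u) - χ s| ≤ ε := by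
  set E : ℕ → Set ℝ := fun n => {v | ∀ s : ℝ, (n : ℝ) ≤ s → |χ (s + v) - χ s| ≤ ε / 2}
    with hEdef
  have hclosed : ∀ n, IsClosed (E n) := by
    intro n
    have hrw : E n = ⋂ (s : ℝ) (_ : (n : ℝ) ≤ s), {v : ℝ | |χ (s + v) - χ s| ≤ ε / 2} := by
      ext v; simp [hEdef, Set.mem_iInter]
    rw [hrw]
    refine isClosed_iInter fun s => isClosed_iInter fun _ => isClosed_le ?_ continuous_const
    exact ((hχ.comp (continuous_const.add continuous_id)).sub continuous_const).abs
  have hcover : (⋃ n, E n) = Set.univ := by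
    rw [Set.eq_univ_iff_forall]
    intro v
    have h2 : ∀ᶠ s in atTop, |χ (s + v) - χ s| ≤ ε / 2 := by
      have h3 := (NormedAddCommGroup.tendsto_nhds_zero.mp (h v)) (ε / 2) (by positivity)
      filter_upwards [h3] with s hs using le_of_lt (by simpa [Real.norm_eq_abs] using hs)
    obtain ⟨X, hX⟩ := eventually_atTop.mp h2
    exact Set.mem_iUnion.2 ⟨⌈X⌉₊, fun s hs => hX s ((Nat.le_ceil X).trans hs)⟩
  obtain ⟨N, v₀, hv₀⟩ := nonempty_interior_of_iUnion_of_closed hclosed hcover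
  rw [mem_interior_iff_mem_nhds, Metric.mem_nhds_iff] at hv₀
  obtain ⟨ρ, hρ, hball⟩ := hv₀
  refine ⟨ρ / 2, by positivity, (N : ℝ) + v₀, fun s hs u hu0 huℓ => ?_⟩
  have hsN : (N : ℝ) ≤ s - v₀ := by linarith
  have hm1 : v₀ ∈ E N := hball (Metric.mem_ball_self hρ)
  have hm2 : v₀ + u ∈ E N := by
    apply hball
    rw [Metric.mem_ball, Real.dist_eq]
    have : |v₀ + u - v₀| = u := by rw [add_sub_cancel_left, abs_of_nonneg hu0]
    rw [this]; linarith
  have h1 : |χ ((s - v₀) + v₀) - χ (s - v₀)| ≤ ε / 2 := hm1 _ hsN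
  have h2 : |χ ((s - v₀) + (v₀ + u)) - χ (s - v₀)| ≤ ε / 2 := hm2 _ hsN
  have e1 : (s - v₀) + v₀ = s := by ring
  have e2 : (s - v₀) + (v₀ + u) = s + u := by ring
  rw [e1] at h1; rw [e2] at h2
  calc |χ (s + u) - χ s| ≤ |χ (s + u) - χ (s - v₀)| + |χ (s - v₀) - χ s| :=
        abs_sub_le _ _ _
    _ ≤ ε / 2 + ε / 2 := add_le_add h2 (by rw [abs_sub_comm]; exact h1)
    _ = ε := by ring

/-- A crude uniform bound for increments over the window `[0,1]`. -/
private lemma window_one_bound (χ : ℝ → ℝ) (hχ : Continuous χ)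
    (h : ∀ u : ℝ, Tendsto (fun s => χ (s + u) - χ s) atTop (𝓝 0)) :
    ∃ C₀ : ℝ, 0 ≤ C₀ ∧ ∃ T : ℝ, ∀ s, T ≤ s → ∀ u, 0 ≤ u → u ≤ 1 → |χ (s + u) - χ s| ≤ C₀ := by
  obtain ⟨ℓ, hℓ, T, hW⟩ := baire_window_s15 χ hχ h one_pos
  have key : ∀ n : ℕ, ∀ s, T ≤ s → ∀ u, 0 ≤ u → u ≤ (n : ℝ) * ℓ → |χ (s + u) - χ s| ≤ (n : ℝ) := by
    intro n
    induction n with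
    | zero =>
      intro s hs u hu0 hu1
      have : u = 0 := le_antisymm (by simpa using hu1) hu0
      simp [this]
    | succ n ih =>
      intro s hs u hu0 hu1
      push_cast at hu1 ⊢
      rcases le_or_gt u ℓ with hc | hc
      · have := hW s hs u hu0 hc
        have hn : (0 : ℝ) ≤ (n : ℝ) := Nat.cast_nonneg n
        linarith
      · have h1 : |χ ((s + ℓ) + (u - ℓ)) - χ (s + ℓ)| ≤ (n : ℝ) :=
          ih (s + ℓ) (by linarith) (u - ℓ) (by linarith) (by linarith)
        have h2 : |χ (s + ℓ) - χ s| ≤ 1 := hW s hs ℓ hℓ.le le_rfl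
        have e : (s + ℓ) + (u - ℓ) = s + u := by ring
        rw [e] at h1
        calc |χ (s + u) - χ s| ≤ |χ (s + u) - χ (s + ℓ)| + |χ (s + ℓ) - χ s| := abs_sub_le _ _ _
          _ ≤ (n : ℝ) + 1 := add_le_add h1 h2
  refine ⟨(⌈1 / ℓ⌉₊ : ℝ), Nat.cast_nonneg _, T, fun s hs u hu0 hu1 => ?_⟩
  have h1 : (1 : ℝ) ≤ (⌈1 / ℓ⌉₊ : ℝ) * ℓ := by
    rw [← div_le_iff₀ hℓ]
    exact Nat.le_ceil _
  exact key _ s hs u hu0 (hu1.trans h1)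

/-- Linear drift bound: increments over `[s,t]` grow at most like `ε₀ (t-s)` plus a constant. -/
private lemma drift_bound (χ : ℝ → ℝ) (hχ : Continuous χ)
    (h : ∀ u : ℝ, Tendsto (fun s => χ (s + u) - χ s) atTop (𝓝 0))
    {ε₀ : ℝ} (hε₀ : 0 < ε₀) :
    ∃ C₂ : ℝ, 0 ≤ C₂ ∧ ∃ T : ℝ, ∀ s t : ℝ, T ≤ s → s ≤ t →
      |χ t - χ s| ≤ ε₀ * (t - s) + C₂ := by
  obtain ⟨C₀, hC₀0, T₂, hC₀⟩ := window_one_bound χ hχ h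
  obtain ⟨T₁, hT₁⟩ : ∃ T₁ : ℝ, ∀ s, T₁ ≤ s → |χ (s + 1) - χ s| ≤ ε₀ := by
    have h3 := (NormedAddCommGroup.tendsto_nhds_zero.mp (h 1)) ε₀ hε₀
    simp only [Real.norm_eq_abs] at h3
    obtain ⟨T₁, hT₁⟩ := eventually_atTop.mp h3
    exact ⟨T₁, fun s hs => (hT₁ s hs).le⟩
  refine ⟨C₀, hC₀0, max T₁ T₂, fun s t hTs hst => ?_⟩
  have hsT₁ : T₁ ≤ s := (le_max_left _ _).trans hTs
  have hsT₂ : T₂ ≤ s := (le_max_right _ _).trans hTs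
  have steps : ∀ n : ℕ, |χ (s + (n : ℝ)) - χ s| ≤ (n : ℝ) * ε₀ := by
    intro n
    induction n with
    | zero => simp
    | succ n ih =>
      have h2 : |χ ((s + (n : ℝ)) + 1) - χ (s + (n : ℝ))| ≤ ε₀ :=
        hT₁ (s + (n : ℝ)) (by have := Nat.cast_nonneg (α := ℝ) n; linarith)
      have e : (s + (n : ℝ)) + 1 = s + ((n : ℕ) + 1 : ℕ) := by push_cast; ring
      rw [e] at h2
      calc |χ (s + ((n : ℕ) + 1 : ℕ)) - χ s|
          ≤ |χ (s + ((n : ℕ) + 1 : ℕ)) - χ (s + (n : ℝ))| + |χ (s + (n : ℝ)) - χ s| :=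
            abs_sub_le _ _ _
        _ ≤ ε₀ + (n : ℝ) * ε₀ := add_le_add h2 ih
        _ = ((n : ℕ) + 1 : ℕ) * ε₀ := by push_cast; ring
  set n : ℕ := ⌊t - s⌋₊ with hn
  have hts : 0 ≤ t - s := by linarith
  have hn1 : (n : ℝ) ≤ t - s := Nat.floor_le hts
  have hn2 : t - s < (n : ℝ) + 1 := Nat.lt_floor_add_one _
  have hfrac := hC₀ (s + (n : ℝ)) (by have := Nat.cast_nonneg (α := ℝ) n; linarith)
    (t - s - (n : ℝ)) (by linarith) (by linarith)
  have e2 : (s + (n : ℝ)) + (t - s - (n : ℝ)) = t := by ring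
  rw [e2] at hfrac
  have hstep := steps n
  calc |χ t - χ s| ≤ |χ t - χ (s + (n : ℝ))| + |χ (s + (n : ℝ)) - χ s| := abs_sub_le _ _ _
    _ ≤ C₀ + (n : ℝ) * ε₀ := add_le_add hfrac hstep
    _ ≤ ε₀ * (t - s) + C₀ := by nlinarith

/-- Increments with a vanishing variable shift tend to zero. -/
private lemma tendsto_chi_window {α : Type*} {l : Filter α} (χ : ℝ → ℝ) (hχ : Continuous χ)
    (h : ∀ u : ℝ, Tendsto (fun s => χ (s + u) - χ s) atTop (𝓝 0))
    (S U : α → ℝ) (hS : Tendsto S l atTop) (hU : Tendsto U l (𝓝 0)) :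
    Tendsto (fun x => χ (S x + U x) - χ (S x)) l (𝓝 0) := by
  rw [NormedAddCommGroup.tendsto_nhds_zero]
  intro ε hε
  obtain ⟨ℓ, hℓ, T, hW⟩ := baire_window_s15 χ hχ h (half_pos hε)
  have h1 : ∀ᶠ x in l, T + ℓ ≤ S x := hS.eventually (eventually_ge_atTop (T + ℓ))
  have h2 : ∀ᶠ x in l, |U x| ≤ ℓ := by
    have h3 := (NormedAddCommGroup.tendsto_nhds_zero.mp hU) ℓ hℓ
    filter_upwards [h3] with x hx using le_of_lt (by simpa [Real.norm_eq_abs] using hx)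
  filter_upwards [h1, h2] with x hx1 hx2
  rw [Real.norm_eq_abs]
  obtain ⟨hx2a, hx2b⟩ := abs_le.1 hx2
  rcases le_or_gt 0 (U x) with hc | hc
  · have := hW (S x) (by linarith) (U x) hc hx2b
    linarith
  · have := hW (S x + U x) (by linarith) (-(U x)) (by linarith) (by linarith)
    rw [show (S x + U x) + -(U x) = S x by ring] at this
    rw [abs_sub_comm]
    linarith

/-- Increments with a convergent variable shift tend to zero. -/
private lemma tendsto_chi_shift {α : Type*} {l : Filter α} (χ : ℝ → ℝ) (hχ : Continuous χ)
    (h : ∀ u : ℝ, Tendsto (fun s => χ (s + u) - χ s) atTop (𝓝 0))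
    (S U : α → ℝ) (hS : Tendsto S l atTop) {u₀ : ℝ} (hU : Tendsto U l (𝓝 u₀)) :
    Tendsto (fun x => χ (S x + U x) - χ (S x)) l (𝓝 0) := by
  have hS' : Tendsto (fun x => S x + u₀) l atTop := tendsto_atTop_add_const_right l u₀ hS
  have hU' : Tendsto (fun x => U x - u₀) l (𝓝 0) := by
    simpa using hU.sub_const u₀
  have t1 := tendsto_chi_window χ hχ h _ _ hS' hU'
  have t2 : Tendsto (fun x => χ (S x + u₀) - χ (S x)) l (𝓝 0) := (h u₀).comp hS
  have t3 := t1.add t2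
  rw [add_zero] at t3
  refine t3.congr fun x => ?_
  rw [show (S x + u₀) + (U x - u₀) = S x + U x by ring]
  ring

/-- Increments with an eventually bounded variable shift tend to zero. -/
private lemma tendsto_chi_bdd (χ : ℝ → ℝ) (hχ : Continuous χ)
    (h : ∀ u : ℝ, Tendsto (fun s => χ (s + u) - χ s) atTop (𝓝 0))
    (S U : ℝ → ℝ) (hS : Tendsto S atTop atTop) {M : ℝ}
    (hU : ∀ᶠ x in atTop, |U x| ≤ M) :
    Tendsto (fun x => χ (S x + U x) - χ (S x)) atTop (𝓝 0) := by
  have hM : 0 ≤ M := le_trans (abs_nonneg _) hU.exists.choose_spec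
  rw [Filter.tendsto_iff_seq_tendsto]
  intro x hx
  by_contra hcon
  obtain ⟨ε, hε, hfreq⟩ : ∃ ε, 0 < ε ∧ ∃ᶠ n in atTop, ε ≤ |χ (S (x n) + U (x n)) - χ (S (x n))| := by
    rw [NormedAddCommGroup.tendsto_nhds_zero] at hcon
    push_neg at hcon
    obtain ⟨ε, hε, hcon⟩ := hcon
    refine ⟨ε, hε, ?_⟩
    exact hcon.mono fun n hn => by
      simpa [Real.norm_eq_abs, not_lt, Function.comp] using hn
  obtain ⟨ns, hns_mono, hns⟩ := extraction_of_frequently_atTop hfreq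
  set V : ℕ → ℝ := fun n => max (-M) (min M (U (x (ns n)))) with hV
  have hVmem : ∀ n, V n ∈ Set.Icc (-M) M :=
    fun n => ⟨le_max_left _ _, max_le (neg_le_self hM) (min_le_left _ _)⟩
  obtain ⟨u₀, hu₀mem, φ, hφmono, hφlim⟩ := isCompact_Icc.tendsto_subseq hVmem
  have hxn : Tendsto (fun n => x (ns (φ n))) atTop atTop :=
    hx.comp ((hns_mono.comp hφmono).tendsto_atTop)
  have hUV : ∀ᶠ n in atTop, U (x (ns (φ n))) = V (φ n) := by
    filter_upwards [hxn.eventually hU] with n hn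
    obtain ⟨h1, h2⟩ := abs_le.1 hn
    simp only [hV]
    rw [min_eq_right h2, max_eq_right h1]
  have hUlim : Tendsto (fun n => U (x (ns (φ n)))) atTop (𝓝 u₀) :=
    hφlim.congr' (hUV.mono fun n hn => hn.symm)
  have hSlim : Tendsto (fun n => S (x (ns (φ n)))) atTop atTop := hS.comp hxn
  have h0 := tendsto_chi_shift χ hχ h _ _ hSlim hUlim
  have hsmall : ∀ᶠ n in atTop,
      |χ (S (x (ns (φ n))) + U (x (ns (φ n)))) - χ (S (x (ns (φ n))))| < ε := by
    have h4 := (NormedAddCommGroup.tendsto_nhds_zero.mp h0) ε hε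
    simpa [Real.norm_eq_abs] using h4
  obtain ⟨n, hn⟩ := hsmall.exists
  exact absurd (hns (φ n)) (not_le.mpr hn)

/-- **Convergence of the rescaled routing coefficients.** Under L1, with `δ` regularly
varying at `∞` with index `−κ` (`κ = (1−λ)⁻¹`) solving `x δ(x) = σ(δ(x))` and tending
to `0`, rates `r_i, r_j → ∞` with `r_j/r_i → 𝔯_{ij} ∈ [0,1]`, and `p_{ij} ≥ 0`:
`p_{ij} (r_i δ(r_i))/(r_j δ(r_j)) → p_{ij} 𝔯_{ij}^{κλ}` (with `0^{κλ} := 0`),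
equivalently `p_{ij} σ(δ(r_i))/σ(δ(r_j)) → p_{ij} 𝔯_{ij}^{κλ}`. -/
theorem routing_coefficient_limit
    (lam : ℝ) (hlam : lam ∈ Set.Ioo (0:ℝ) 1)
    (σ : ℝ → ℝ) (hσcont : ContinuousOn σ (Set.Ici 0))
    (hσpos : ∀ t > (0:ℝ), 0 < σ t)
    -- σ regularly varying at 0 with index λ (assumption L1)
    (hL1 : ∀ t > (0:ℝ), Tendsto (fun x => σ (t * x) / σ x) (𝓝[>] 0) (𝓝 (t ^ lam)))
    (x₀ : ℝ) (δ : ℝ → ℝ)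
    (hδpos : ∀ x > x₀, 0 < δ x)
    (hδRV : ∀ t > (0:ℝ),
      Tendsto (fun x => δ (t * x) / δ x) atTop (𝓝 (t ^ (-(1 - lam)⁻¹))))
    (hδeq : ∀ x > x₀, x * δ x = σ (δ x))
    (hδ0 : Tendsto δ atTop (𝓝 0))
    (ri rj : ℝ → ℝ)
    (hri : Tendsto ri atTop atTop) (hrj : Tendsto rj atTop atTop)
    (𝔯 : ℝ) (h𝔯 : 𝔯 ∈ Set.Icc (0:ℝ) 1)
    (hratio : Tendsto (fun u => rj u / ri u) atTop (𝓝 𝔯))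
    (p : ℝ) (hp : 0 ≤ p) :
    Tendsto (fun u => p * (ri u * δ (ri u)) / (rj u * δ (rj u))) atTop
      (𝓝 (p * 𝔯 ^ ((1 - lam)⁻¹ * lam))) ∧
    Tendsto (fun u => p * σ (δ (ri u)) / σ (δ (rj u))) atTop
      (𝓝 (p * 𝔯 ^ ((1 - lam)⁻¹ * lam))) := by
  obtain ⟨hlam0, hlam1⟩ := hlam
  have h1lam : (0:ℝ) < 1 - lam := by linarith
  have hne : (1:ℝ) - lam ≠ 0 := ne_of_gt h1lam
  -- the additive increment function χ
  have hσexp : ∀ s : ℝ, 0 < σ (Real.exp (-s)) := fun s => hσpos _ (Real.exp_pos _)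
  set χ : ℝ → ℝ := fun s => Real.log (σ (Real.exp (-s))) + lam * s with hχdef
  have hχcont : Continuous χ := by
    have hcont1 : Continuous (fun s : ℝ => σ (Real.exp (-s))) :=
      hσcont.comp_continuous (Real.continuous_exp.comp continuous_neg)
        (fun x => Set.mem_Ici.2 (Real.exp_pos _).le)
    exact (hcont1.log fun s => ne_of_gt (hσexp s)).add (continuous_const.mul continuous_id)
  have hχlim : ∀ u : ℝ, Tendsto (fun s => χ (s + u) - χ s) atTop (𝓝 0) := by
    intro u
    have ht0 : (0:ℝ) < Real.exp (-u) := Real.exp_pos _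
    have hY : Tendsto (fun s : ℝ => Real.exp (-s)) atTop (𝓝[>] (0:ℝ)) := by
      apply tendsto_nhdsWithin_of_tendsto_nhds_of_eventually_within
      · exact Real.tendsto_exp_atBot.comp tendsto_neg_atTop_atBot
      · exact Eventually.of_forall fun s => Real.exp_pos _
    have h2 : Tendsto (fun s => σ (Real.exp (-u) * Real.exp (-s)) / σ (Real.exp (-s))) atTop
        (𝓝 (Real.exp (-u) ^ lam)) := (hL1 _ ht0).comp hY
    have h3 : Tendsto
        (fun s => Real.log (σ (Real.exp (-u) * Real.exp (-s)) / σ (Real.exp (-s))) + lam * u)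
        atTop (𝓝 (Real.log (Real.exp (-u) ^ lam) + lam * u)) :=
      (((Real.continuousAt_log (ne_of_gt (Real.rpow_pos_of_pos ht0 lam))).tendsto).comp h2).add_const _
    have hval : Real.log (Real.exp (-u) ^ lam) + lam * u = 0 := by
      rw [Real.log_rpow ht0, Real.log_exp]; ring
    rw [hval] at h3
    refine h3.congr fun s => ?_
    have e1 : Real.exp (-(s + u)) = Real.exp (-u) * Real.exp (-s) := by
      rw [← Real.exp_add]; ring_nf
    have hpos1 : 0 < σ (Real.exp (-u) * Real.exp (-s)) := by rw [← e1]; exact hσexp _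
    rw [Real.log_div (ne_of_gt hpos1) (ne_of_gt (hσexp s))]
    simp only [hχdef, e1]
    ring
  -- eventual facts
  have hEri : ∀ᶠ u in atTop, x₀ < ri u := hri.eventually_gt_atTop x₀
  have hErj : ∀ᶠ u in atTop, x₀ < rj u := hrj.eventually_gt_atTop x₀
  have hEri0 : ∀ᶠ u in atTop, 0 < ri u := hri.eventually_gt_atTop 0
  have hErj0 : ∀ᶠ u in atTop, 0 < rj u := hrj.eventually_gt_atTop 0
  have hEA : ∀ᶠ u in atTop, 0 < δ (ri u) := hEri.mono fun u hu => hδpos _ hu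
  have hEB : ∀ᶠ u in atTop, 0 < δ (rj u) := hErj.mono fun u hu => hδpos _ hu
  have hI1 : ∀ᶠ u in atTop, σ (δ (ri u)) = ri u * δ (ri u) :=
    hEri.mono fun u hu => (hδeq _ hu).symm
  have hI2 : ∀ᶠ u in atTop, σ (δ (rj u)) = rj u * δ (rj u) :=
    hErj.mono fun u hu => (hδeq _ hu).symm
  set sA : ℝ → ℝ := fun u => -Real.log (δ (ri u)) with hsAdef
  set sB : ℝ → ℝ := fun u => -Real.log (δ (rj u)) with hsBdef
  have hsA : Tendsto sA atTop atTop := by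
    have h1 : Tendsto (fun u => δ (ri u)) atTop (𝓝[>] 0) :=
      tendsto_nhdsWithin_of_tendsto_nhds_of_eventually_within _ (hδ0.comp hri) hEA
    exact tendsto_neg_atBot_atTop.comp (Real.tendsto_log_nhdsGT_zero.comp h1)
  have hsB : Tendsto sB atTop atTop := by
    have h1 : Tendsto (fun u => δ (rj u)) atTop (𝓝[>] 0) :=
      tendsto_nhdsWithin_of_tendsto_nhds_of_eventually_within _ (hδ0.comp hrj) hEB
    exact tendsto_neg_atBot_atTop.comp (Real.tendsto_log_nhdsGT_zero.comp h1)
  -- identities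
  have hlogσA : ∀ᶠ u in atTop, Real.log (σ (δ (ri u))) = χ (sA u) - lam * sA u := by
    filter_upwards [hEA] with u hu
    simp only [hχdef, hsAdef, neg_neg, Real.exp_log hu]
    ring
  have hlogσB : ∀ᶠ u in atTop, Real.log (σ (δ (rj u))) = χ (sB u) - lam * sB u := by
    filter_upwards [hEB] with u hu
    simp only [hχdef, hsBdef, neg_neg, Real.exp_log hu]
    ring
  have hlogri : ∀ᶠ u in atTop, Real.log (ri u) = χ (sA u) + (1 - lam) * sA u := by
    filter_upwards [hlogσA, hI1, hEA, hEri0] with u h1 h2 h3 h4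
    have h5 : Real.log (ri u) = Real.log (σ (δ (ri u))) - Real.log (δ (ri u)) := by
      rw [h2, Real.log_mul (ne_of_gt h4) (ne_of_gt h3)]; ring
    rw [h5, h1]
    simp only [hsAdef]
    ring
  have hlogrj : ∀ᶠ u in atTop, Real.log (rj u) = χ (sB u) + (1 - lam) * sB u := by
    filter_upwards [hlogσB, hI2, hEB, hErj0] with u h1 h2 h3 h4
    have h5 : Real.log (rj u) = Real.log (σ (δ (rj u))) - Real.log (δ (rj u)) := by
      rw [h2, Real.log_mul (ne_of_gt h4) (ne_of_gt h3)]; ring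
    rw [h5, h1]
    simp only [hsBdef]
    ring
  have hGid : ∀ᶠ u in atTop, Real.log (ri u) - Real.log (rj u)
      = (χ (sA u) - χ (sB u)) + (1 - lam) * (sA u - sB u) := by
    filter_upwards [hlogri, hlogrj] with u h1 h2
    rw [h1, h2]; ring
  have hlogσAB : ∀ᶠ u in atTop, Real.log (σ (δ (ri u))) - Real.log (σ (δ (rj u)))
      = (χ (sA u) - χ (sB u)) - lam * (sA u - sB u) := by
    filter_upwards [hlogσA, hlogσB] with u h1 h2
    rw [h1, h2]; ring
  clear_value χ sA sB
  -- it suffices to control the σ-ratio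
  suffices key : Tendsto (fun u => σ (δ (ri u)) / σ (δ (rj u))) atTop
      (𝓝 (𝔯 ^ ((1 - lam)⁻¹ * lam))) by
    constructor
    · refine (key.const_mul p).congr' ?_
      filter_upwards [hI1, hI2] with u h1 h2
      rw [h1, h2]; ring
    · refine (key.const_mul p).congr fun u => (mul_div_assoc _ _ _).symm
  rcases eq_or_lt_of_le h𝔯.1 with h𝔯0 | h𝔯pos
  · -- 𝔯 = 0
    have h𝔯eq : 𝔯 = 0 := h𝔯0.symm
    subst h𝔯eq
    rw [Real.zero_rpow (ne_of_gt (mul_pos (inv_pos.2 h1lam) hlam0))]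
    have hinv : Tendsto (fun u => ri u / rj u) atTop atTop := by
      have h1 : Tendsto (fun u => rj u / ri u) atTop (𝓝[>] 0) := by
        apply tendsto_nhdsWithin_of_tendsto_nhds_of_eventually_within _ hratio
        filter_upwards [hEri0, hErj0] with u h1 h2
        exact div_pos h2 h1
      refine h1.inv_tendsto_nhdsGT_zero.congr fun u => ?_
      show (rj u / ri u)⁻¹ = ri u / rj u
      rw [inv_div]
    have hG : Tendsto (fun u => Real.log (ri u) - Real.log (rj u)) atTop atTop := by
      refine (Real.tendsto_log_atTop.comp hinv).congr' ?_
      filter_upwards [hEri0, hErj0] with u h1 h2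
      show Real.log (ri u / rj u) = _
      rw [Real.log_div (ne_of_gt h1) (ne_of_gt h2)]
    have hε₀ : (0:ℝ) < min ((1 - lam)/2) (lam/2) := lt_min (by linarith) (by linarith)
    obtain ⟨C₂, hC₂0, T, hE⟩ := drift_bound χ hχcont hχlim hε₀
    set ε₀ := min ((1 - lam)/2) (lam/2) with hε₀def
    have hε₀a : ε₀ ≤ (1 - lam)/2 := min_le_left _ _
    have hε₀b : ε₀ ≤ lam/2 := min_le_right _ _
    have hε₀pos : 0 < ε₀ := hε₀
    clear_value ε₀
    have hDge : ∀ᶠ u in atTop,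
        (Real.log (ri u) - Real.log (rj u) - C₂)/2 ≤ sA u - sB u ∧ 0 ≤ sA u - sB u := by
      filter_upwards [hsA.eventually_ge_atTop T, hsB.eventually_ge_atTop T, hGid,
        hG.eventually_gt_atTop C₂] with u h1 h2 h4 h5
      rcases le_or_gt 0 (sA u - sB u) with hd | hd
      · obtain ⟨h6a, h6b⟩ := abs_le.1 (hE (sB u) (sA u) h2 (by linarith))
        have p1 : ε₀ * (sA u - sB u) ≤ 1 * (sA u - sB u) :=
          mul_le_mul_of_nonneg_right (by linarith) hd
        have p2 : (1 - lam) * (sA u - sB u) ≤ 1 * (sA u - sB u) :=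
          mul_le_mul_of_nonneg_right (by linarith) hd
        exact ⟨by linarith, hd⟩
      · exfalso
        obtain ⟨h6a, h6b⟩ := abs_le.1 (hE (sA u) (sB u) h1 (by linarith))
        have p1 : 0 ≤ ((1 - lam) - ε₀) * (sB u - sA u) :=
          mul_nonneg (by linarith) (by linarith)
        have p2 : ((1 - lam) - ε₀) * (sB u - sA u)
            = (1 - lam) * (sB u - sA u) - ε₀ * (sB u - sA u) := by ring
        linarith
    have hDtop : Tendsto (fun u => sA u - sB u) atTop atTop := by
      refine tendsto_atTop_mono' atTop (hDge.mono fun u hu => hu.1) ?_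
      have h7 : Tendsto (fun u => Real.log (ri u) - Real.log (rj u) - C₂) atTop atTop :=
        (tendsto_atTop_add_const_right _ (-C₂) hG).congr fun u => by ring
      exact (h7.const_mul_atTop (show (0:ℝ) < 1/2 by norm_num)).congr fun u => by ring
    have hσtop : Tendsto (fun u => Real.log (σ (δ (ri u))) - Real.log (σ (δ (rj u))))
        atTop atBot := by
      have hmaj : Tendsto (fun u => C₂ + -(lam/2 * (sA u - sB u))) atTop atBot := by
        apply tendsto_atBot_add_const_left
        exact tendsto_neg_atTop_atBot.comp (hDtop.const_mul_atTop (by linarith : (0:ℝ) < lam/2))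
      refine tendsto_atBot_mono' atTop ?_ hmaj
      filter_upwards [hsA.eventually_ge_atTop T, hsB.eventually_ge_atTop T, hlogσAB, hDge]
        with u h1 h2 h3 hd
      obtain ⟨h6a, h6b⟩ := abs_le.1 (hE (sB u) (sA u) h2 (by linarith [hd.2]))
      have p1 : ε₀ * (sA u - sB u) ≤ (lam/2) * (sA u - sB u) :=
        mul_le_mul_of_nonneg_right hε₀b hd.2
      rw [h3]
      linarith
    have h9 := Real.tendsto_exp_atBot.comp hσtop
    refine h9.congr' ?_
    filter_upwards [hEA, hEB] with u h1 h2
    show Real.exp (Real.log (σ (δ (ri u))) - Real.log (σ (δ (rj u)))) = _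
    rw [Real.exp_sub, Real.exp_log (hσpos _ h1), Real.exp_log (hσpos _ h2)]
  · -- 𝔯 > 0
    have hlograt : Tendsto (fun u => Real.log (rj u / ri u)) atTop (𝓝 (Real.log 𝔯)) :=
      ((Real.continuousAt_log (ne_of_gt h𝔯pos)).tendsto).comp hratio
    have hG : Tendsto (fun u => Real.log (ri u) - Real.log (rj u)) atTop
        (𝓝 (-Real.log 𝔯)) := by
      refine hlograt.neg.congr' ?_
      filter_upwards [hEri0, hErj0] with u h1 h2
      show -Real.log (rj u / ri u) = _
      rw [Real.log_div (ne_of_gt h2) (ne_of_gt h1)]; ring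
    have hL0 : 0 ≤ -Real.log 𝔯 := by
      have := Real.log_nonpos h𝔯pos.le h𝔯.2; linarith
    obtain ⟨C₂, hC₂0, T, hE⟩ := drift_bound χ hχcont hχlim
      (show (0:ℝ) < (1 - lam)/2 by linarith)
    set ε₀ := (1 - lam)/2 with hε₀def
    have hε₀pos : 0 < ε₀ := by rw [hε₀def]; linarith
    have e2 : (1 - lam) = 2 * ε₀ := by rw [hε₀def]; ring
    clear_value ε₀
    set M := (-Real.log 𝔯 + 1 + C₂) / ε₀ with hMdef
    have hM0 : 0 ≤ M := div_nonneg (by linarith) hε₀pos.le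
    have hbdd : ∀ᶠ u in atTop, |sA u - sB u| ≤ M := by
      filter_upwards [hsA.eventually_ge_atTop T, hsB.eventually_ge_atTop T, hGid,
        hG.eventually (eventually_le_nhds (lt_add_one _)),
        hG.eventually (eventually_ge_nhds (sub_one_lt _))] with u h1 h2 h4 h5 h6
      rw [abs_le]
      rcases le_or_gt 0 (sA u - sB u) with hd | hd
      · obtain ⟨h7a, h7b⟩ := abs_le.1 (hE (sB u) (sA u) h2 (by linarith))
        have p : (1 - lam) * (sA u - sB u) = 2 * (ε₀ * (sA u - sB u)) := by
          rw [e2]; ring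
        constructor
        · linarith
        · rw [hMdef, le_div_iff₀ hε₀pos]
          nlinarith
      · obtain ⟨h7a, h7b⟩ := abs_le.1 (hE (sA u) (sB u) h1 (by linarith))
        have p : (1 - lam) * (sA u - sB u) = 2 * (ε₀ * (sA u - sB u)) := by
          rw [e2]; ring
        constructor
        · rw [neg_le, hMdef, le_div_iff₀ hε₀pos]
          nlinarith
        · linarith
    have hX : Tendsto (fun u => χ (sA u) - χ (sB u)) atTop (𝓝 0) := by
      have h8 := tendsto_chi_bdd χ hχcont hχlim sB (fun u => sA u - sB u) hsB hbdd
      refine h8.congr fun u => ?_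
      rw [show sB u + (sA u - sB u) = sA u by ring]
    have hD : Tendsto (fun u => sA u - sB u) atTop
        (𝓝 ((-Real.log 𝔯) / (1 - lam))) := by
      have h9 : Tendsto
          (fun u => ((Real.log (ri u) - Real.log (rj u)) - (χ (sA u) - χ (sB u))) * (1 - lam)⁻¹)
          atTop (𝓝 ((-Real.log 𝔯 - 0) * (1 - lam)⁻¹)) := (hG.sub hX).mul_const _
      have hval : (-Real.log 𝔯 - 0) * (1 - lam)⁻¹ = (-Real.log 𝔯) / (1 - lam) := by
        rw [sub_zero, div_eq_mul_inv]
      rw [hval] at h9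
      refine h9.congr' ?_
      filter_upwards [hGid] with u h4
      rw [h4]
      field_simp
      ring
    have hlogσ : Tendsto (fun u => Real.log (σ (δ (ri u))) - Real.log (σ (δ (rj u))))
        atTop (𝓝 (0 - lam * ((-Real.log 𝔯) / (1 - lam)))) := by
      refine (hX.sub (hD.const_mul lam)).congr' ?_
      filter_upwards [hlogσAB] with u h3
      exact h3.symm
    have h10 := (Real.continuous_exp.tendsto _).comp hlogσ
    have hval2 : Real.exp (0 - lam * ((-Real.log 𝔯) / (1 - lam)))
        = 𝔯 ^ ((1 - lam)⁻¹ * lam) := by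
      rw [Real.rpow_def_of_pos h𝔯pos]
      congr 1
      rw [div_eq_mul_inv]
      ring
    rw [hval2] at h10
    refine h10.congr' ?_
    filter_upwards [hEA, hEB] with u h1 h2
    show Real.exp (Real.log (σ (δ (ri u))) - Real.log (σ (δ (rj u)))) = _
    rw [Real.exp_sub, Real.exp_log (hσpos _ h1), Real.exp_log (hσpos _ h2)]
end
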